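/- arXiv:1401.1805 — 4 statements merged into one kernel-verified Lean document; each statement's English description precedes it below -/
import Mathlib

section
/- For integers t ≥ 2 and a ≥ 0, the number of lattice paths with steps (0,1) and (1,0) from (0,0) to (n, n(t-1)+a) all of whose points (x,y) satisfy y ≤ a + x(t-1) equals (a+1)/(n(t-1)+a+1) · C(nt+a, n). -/
open Finset

private def stp (q : ℕ) (v : ℕ → Bool) (j : ℕ) : ℤ := if v j then -(q : ℤ) else 1

private def psum (q : ℕ) (v : ℕ → Bool) (k : ℕ) : ℤ := ∑ j ∈ Finset.range k, stp q v j

private lemma psum_succ (q : ℕ) (v : ℕ → Bool) (k : ℕ) :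
    psum q v (k + 1) = psum q v k + stp q v k := Finset.sum_range_succ _ _

private lemma stp_le_one (q : ℕ) (v : ℕ → Bool) (j : ℕ) : stp q v j ≤ 1 := by
  unfold stp; split <;> omega

private lemma psum_shift (q : ℕ) (v : ℕ → Bool) (r : ℕ) (k : ℕ) :
    psum q (fun j => v (j + r)) k = psum q v (r + k) - psum q v r := by
  induction k with
  | zero => simp [psum]
  | succ k ih =>
    rw [psum_succ, ih, show r + (k + 1) = (r + k) + 1 by omega, psum_succ]
    have h : stp q (fun j => v (j + r)) k = stp q v (r + k) := by
      unfold stp; simp only [Nat.add_comm k r]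
    rw [h]; ring

private lemma psum_period (q a m : ℕ) (v : ℕ → Bool) (hper : ∀ j, v (j + m) = v j)
    (htot : psum q v m = (a : ℤ) + 1) :
    ∀ k, psum q v (k + m) = psum q v k + ((a : ℤ) + 1) := by
  intro k
  induction k with
  | zero => simpa [psum] using htot
  | succ k ih =>
    rw [show k + 1 + m = (k + m) + 1 by omega, psum_succ, ih, psum_succ]
    have h : stp q v (k + m) = stp q v k := by unfold stp; rw [hper k]
    rw [h]; ring

private instance instDomDec (q m : ℕ) (v : ℕ → Bool) :
    DecidablePred (fun r => ∀ k ∈ Finset.Icc 1 m, psum q v r < psum q v (r + k)) :=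
  fun _ => Finset.decidableDforallFinset

private lemma cycle_lemma (q a m : ℕ) (v : ℕ → Bool) (hq : 1 ≤ q) (hm : 0 < m)
    (hper : ∀ j, v (j + m) = v j) (htot : psum q v m = (a : ℤ) + 1) :
    ((Finset.range m).filter
      (fun r => ∀ k ∈ Finset.Icc 1 m, psum q v r < psum q v (r + k))).card = a + 1 := by
  classical
  have hper' := psum_period q a m v hper htot
  have hne : ((Finset.range m).image (psum q v)).Nonempty := by
    rw [Finset.image_nonempty, Finset.nonempty_range_iff]; omega
  set s : ℕ → ℤ := psum q v with hs
  set c0 := ((Finset.range m).image s).min' hne with hc0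
  obtain ⟨j0, hj0m, hj0⟩ : ∃ j0, j0 < m ∧ s j0 = c0 := by
    have h := Finset.min'_mem _ hne
    rw [Finset.mem_image] at h
    obtain ⟨j, hj, hjs⟩ := h
    exact ⟨j, Finset.mem_range.mp hj, hjs⟩
  have hmin : ∀ j, j < m → c0 ≤ s j := fun j hj =>
    Finset.min'_le _ _ (Finset.mem_image_of_mem s (Finset.mem_range.mpr hj))
  have hglb : ∀ k, c0 ≤ s k := by
    intro k
    induction k using Nat.strong_induction_on with
    | _ k ih =>
      rcases lt_or_ge k m with h | h
      · exact hmin k h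
      · have h2 : k - m < k := by omega
        have h3 := ih (k - m) h2
        have h4 := hper' (k - m)
        rw [show k - m + m = k by omega] at h4
        omega
  have hBne : ∀ c : ℤ, c0 ≤ c →
      ((Finset.range (2 * m)).filter (fun j => s j ≤ c)).Nonempty := by
    intro c hc
    exact ⟨j0, Finset.mem_filter.mpr ⟨Finset.mem_range.mpr (by omega), by omega⟩⟩
  have key : ∀ (c : ℤ) (hc : c0 ≤ c), c ≤ c0 + a →
      s (((Finset.range (2 * m)).filter (fun j => s j ≤ c)).max' (hBne c hc)) = c ∧
      (((Finset.range (2 * m)).filter (fun j => s j ≤ c)).max' (hBne c hc)) < m ∧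
      (∀ j, (((Finset.range (2 * m)).filter (fun j => s j ≤ c)).max' (hBne c hc)) < j →
        c < s j) := by
    intro c hc hc2
    set r := (((Finset.range (2 * m)).filter (fun j => s j ≤ c)).max' (hBne c hc)) with hr
    have hrmem : r ∈ (Finset.range (2 * m)).filter (fun j => s j ≤ c) :=
      Finset.max'_mem _ (hBne c hc)
    rw [Finset.mem_filter, Finset.mem_range] at hrmem
    obtain ⟨hr2m, hrle⟩ := hrmem
    have hT : ∀ j, r < j → c < s j := by
      intro j hj
      rcases lt_or_ge j (2 * m) with h | h
      · by_contra hle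
        push_neg at hle
        have hjB : j ∈ (Finset.range (2 * m)).filter (fun j => s j ≤ c) :=
          Finset.mem_filter.mpr ⟨Finset.mem_range.mpr h, hle⟩
        have := Finset.le_max' _ j hjB
        omega
      · have h3 := hper' (j - 2 * m)
        have h4 := hper' (j - 2 * m + m)
        rw [show j - 2 * m + m + m = j by omega] at h4
        have h5 := hglb (j - 2 * m)
        omega
    have hval : s r = c := by
      have h1 : c < s (r + 1) := hT _ (by omega)
      have h2 := psum_succ q v r
      have h3 := stp_le_one q v r
      rw [← hs] at h2
      omega
    refine ⟨hval, ?_, hT⟩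
    by_contra hrm
    push_neg at hrm
    have h3 := hper' (r - m)
    rw [show r - m + m = r by omega] at h3
    have h5 := hglb (r - m)
    omega
  have hbij : (Finset.Icc c0 (c0 + (a : ℤ))).card =
      ((Finset.range m).filter
        (fun r => ∀ k ∈ Finset.Icc 1 m, s r < s (r + k))).card := by
    apply Finset.card_bij (fun c hc => (((Finset.range (2 * m)).filter (fun j => s j ≤ c)).max'
      (hBne c (Finset.mem_Icc.mp hc).1)))
    · intro c hc
      rw [Finset.mem_Icc] at hc
      obtain ⟨hval, hlt, hT⟩ := key c hc.1 hc.2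
      rw [Finset.mem_filter, Finset.mem_range]
      refine ⟨hlt, ?_⟩
      intro k hk
      rw [Finset.mem_Icc] at hk
      rw [hval]
      exact hT _ (by omega)
    · intro c1 hc1 c2 hc2 heq
      rw [Finset.mem_Icc] at hc1 hc2
      have h1 := (key c1 hc1.1 hc1.2).1
      have h2 := (key c2 hc2.1 hc2.2).1
      rw [heq] at h1
      omega
    · intro r hr
      rw [Finset.mem_filter, Finset.mem_range] at hr
      obtain ⟨hrm, hdom⟩ := hr
      have hT : ∀ j, r < j → s r < s j := by
        intro j
        induction j using Nat.strong_induction_on with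
        | _ j ih =>
          intro hj
          rcases le_or_gt (j - r) m with h1 | h1
          · have h2 := hdom (j - r) (Finset.mem_Icc.mpr ⟨by omega, h1⟩)
            rw [show r + (j - r) = j by omega] at h2
            exact h2
          · have h2 : s r < s (j - m) := ih (j - m) (by omega) (by omega)
            have h3 := hper' (j - m)
            rw [show j - m + m = j by omega] at h3
            omega
      have hcIcc : s r ∈ Finset.Icc c0 (c0 + (a : ℤ)) := by
        rw [Finset.mem_Icc]
        constructor
        · exact hglb r
        · have h1 := hT (j0 + m) (by omega)
          have h2 := hper' j0
          omega
      refine ⟨s r, hcIcc, ?_⟩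
      apply le_antisymm
      · by_contra hgt
        push_neg at hgt
        have hmem : (((Finset.range (2 * m)).filter (fun j => s j ≤ s r)).max'
            (hBne (s r) (Finset.mem_Icc.mp hcIcc).1)) ∈
            (Finset.range (2 * m)).filter (fun j => s j ≤ s r) :=
          Finset.max'_mem _ _
        rw [Finset.mem_filter] at hmem
        have := hT _ hgt
        omega
      · apply Finset.le_max'
        exact Finset.mem_filter.mpr ⟨Finset.mem_range.mpr (by omega), le_refl _⟩
  rw [← hbij, Int.card_Icc]
  omega

private def ev (m : ℕ) (u : Fin (m + 1) → Bool) : ℕ → Bool :=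
  fun j => u ⟨j % (m + 1), Nat.mod_lt _ (Nat.succ_pos m)⟩

private def ew (N : ℕ) (w : Fin N → Bool) : ℕ → Bool :=
  fun j => if h : j < N then w ⟨j, h⟩ else false

private def rotW (m : ℕ) (c : Fin (m + 1)) (u : Fin (m + 1) → Bool) : Fin (m + 1) → Bool :=
  fun i => u (i + c)

private lemma ev_per (m : ℕ) (u : Fin (m + 1) → Bool) (j : ℕ) :
    ev m u (j + (m + 1)) = ev m u j := by
  unfold ev; congr 1; exact Fin.ext (Nat.add_mod_right j (m + 1))

private lemma ev_val (m : ℕ) (u : Fin (m + 1) → Bool) (i : Fin (m + 1)) :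
    ev m u (i : ℕ) = u i := by
  unfold ev; congr 1; exact Fin.ext (Nat.mod_eq_of_lt i.isLt)

private lemma ev_rot (m : ℕ) (c : Fin (m + 1)) (u : Fin (m + 1) → Bool) :
    ev m (rotW m c u) = fun j => ev m u (j + (c : ℕ)) := by
  funext j
  unfold ev rotW
  congr 1
  rw [Fin.add_def]
  exact Fin.ext (Nat.mod_add_mod j (m + 1) (c : ℕ))

private lemma total_ev (q m : ℕ) (u : Fin (m + 1) → Bool) :
    psum q (ev m u) (m + 1)
      = (m + 1 : ℤ) - ((Finset.univ.filter (fun i => u i = true)).card : ℤ) * (q + 1) := by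
  classical
  unfold psum
  rw [← Fin.sum_univ_eq_sum_range (fun j => stp q (ev m u) j) (m + 1)]
  have h : ∀ i : Fin (m + 1), stp q (ev m u) (i : ℕ)
      = 1 - (if u i = true then (q : ℤ) + 1 else 0) := by
    intro i
    unfold stp
    rw [ev_val]
    cases hui : u i <;> simp [hui] <;> ring
  rw [Finset.sum_congr rfl (fun i _ => h i), Finset.sum_sub_distrib, Finset.sum_const,
    ← Finset.sum_filter, Finset.sum_const]
  simp only [Finset.card_univ, Fintype.card_fin, nsmul_eq_mul, mul_one]
  push_cast
  ring

private lemma cnt_rot (m : ℕ) (c : Fin (m + 1)) (u : Fin (m + 1) → Bool) :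
    (Finset.univ.filter (fun i => rotW m c u i = true)).card
      = (Finset.univ.filter (fun i => u i = true)).card := by
  classical
  refine Finset.card_bij' (fun i _ => i + c) (fun i _ => i - c) ?_ ?_ ?_ ?_
  · intro i hi
    rw [Finset.mem_filter] at *
    exact ⟨Finset.mem_univ _, hi.2⟩
  · intro i hi
    rw [Finset.mem_filter] at *
    refine ⟨Finset.mem_univ _, ?_⟩
    show u (i - c + c) = true
    rw [sub_add_cancel]
    exact hi.2
  · intro i _
    exact add_sub_cancel_right i c
  · intro i _
    exact sub_add_cancel i c

private lemma rotW_rotW (m : ℕ) (c c' : Fin (m + 1)) (u : Fin (m + 1) → Bool) :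
    rotW m c (rotW m c' u) = rotW m (c + c') u := by
  funext i; unfold rotW; rw [add_assoc]

private lemma rotW_zero (m : ℕ) (u : Fin (m + 1) → Bool) : rotW m 0 u = u := by
  funext i; unfold rotW; rw [add_zero]

private def Pd (q m : ℕ) (u : Fin (m + 1) → Bool) : Prop :=
  ∀ k ∈ Finset.Icc 1 (m + 1), 0 < psum q (ev m u) k

private instance instPdDec (q m : ℕ) : DecidablePred (Pd q m) :=
  fun _ => Finset.decidableDforallFinset

private lemma rot_dom (q m : ℕ) (c : Fin (m + 1)) (u : Fin (m + 1) → Bool) :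
    Pd q m (rotW m c u) ↔
      ∀ k ∈ Finset.Icc 1 (m + 1), psum q (ev m u) (c : ℕ) < psum q (ev m u) ((c : ℕ) + k) := by
  unfold Pd
  rw [ev_rot]
  simp only [psum_shift, sub_pos]

private lemma dom_zero (q m : ℕ) (hq : 1 ≤ q) (u : Fin (m + 1) → Bool) (h : Pd q m u) :
    u 0 = false := by
  have h1 := h 1 (Finset.mem_Icc.mpr ⟨le_refl 1, by omega⟩)
  rw [show (1 : ℕ) = 0 + 1 from rfl, psum_succ] at h1
  have h0 : psum q (ev m u) 0 = 0 := by simp [psum]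
  rw [h0] at h1
  have hev : ev m u 0 = u 0 := by
    simp [ev]
  unfold stp at h1
  rw [hev] at h1
  cases h0u : u 0
  · rfl
  · rw [h0u] at h1; simp at h1; omega

private lemma card_count (m n : ℕ) :
    ((Finset.univ : Finset (Fin m → Bool)).filter
      (fun u => (Finset.univ.filter (fun i => u i = true)).card = n)).card = m.choose n := by
  classical
  have hp : (Finset.powersetCard n (Finset.univ : Finset (Fin m))).card = m.choose n := by
    simp [Finset.card_powersetCard]
  rw [← hp]
  refine Finset.card_bij' (fun u _ => Finset.univ.filter (fun i => u i = true))
    (fun s _ => fun i => decide (i ∈ s)) ?_ ?_ ?_ ?_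
  · intro u hu
    rw [Finset.mem_powersetCard]
    exact ⟨Finset.subset_univ _, (Finset.mem_filter.mp hu).2⟩
  · intro s hs
    rw [Finset.mem_filter]
    refine ⟨Finset.mem_univ _, ?_⟩
    rw [Finset.mem_powersetCard] at hs
    simpa using hs.2
  · intro u _
    funext i
    simp
  · intro s _
    ext i
    simp

private lemma count_step (N : ℕ) (p : Fin N → Prop) [DecidablePred p] (i : ℕ) (hi : i < N) :
    (Finset.univ.filter (fun j : Fin N => (j : ℕ) < i + 1 ∧ p j)).card
      = (Finset.univ.filter (fun j : Fin N => (j : ℕ) < i ∧ p j)).card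
        + (if p ⟨i, hi⟩ then 1 else 0) := by
  classical
  have hsplit : (Finset.univ.filter (fun j : Fin N => (j : ℕ) < i + 1 ∧ p j))
      = (Finset.univ.filter (fun j : Fin N => (j : ℕ) < i ∧ p j))
        ∪ (Finset.univ.filter (fun j : Fin N => j = ⟨i, hi⟩ ∧ p j)) := by
    ext j
    simp only [Finset.mem_filter, Finset.mem_union, Finset.mem_univ, true_and]
    constructor
    · rintro ⟨h1, h2⟩
      rcases Nat.lt_succ_iff_lt_or_eq.mp h1 with h | h
      · exact Or.inl ⟨h, h2⟩
      · exact Or.inr ⟨Fin.ext h, h2⟩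
    · rintro (⟨h1, h2⟩ | ⟨h1, h2⟩)
      · exact ⟨Nat.lt_succ_of_lt h1, h2⟩
      · refine ⟨?_, h2⟩
        rw [h1]
        exact Nat.lt_succ_self i
  rw [hsplit, Finset.card_union_of_disjoint]
  · congr 1
    by_cases hp : p ⟨i, hi⟩
    · rw [if_pos hp]
      rw [show (Finset.univ.filter (fun j : Fin N => j = ⟨i, hi⟩ ∧ p j)) = {⟨i, hi⟩} from by
        ext j
        simp only [Finset.mem_filter, Finset.mem_univ, true_and, Finset.mem_singleton]
        constructor
        · rintro ⟨h1, _⟩; exact h1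
        · rintro rfl; exact ⟨rfl, hp⟩]
      exact Finset.card_singleton _
    · rw [if_neg hp]
      rw [show (Finset.univ.filter (fun j : Fin N => j = ⟨i, hi⟩ ∧ p j)) = ∅ from by
        ext j
        simp only [Finset.mem_filter, Finset.mem_univ, true_and, Finset.notMem_empty,
          iff_false, not_and]
        rintro rfl h2
        exact hp h2]
      rfl
  · rw [Finset.disjoint_left]
    intro j hj1 hj2
    rw [Finset.mem_filter] at hj1 hj2
    have h1 := hj1.2.1
    rw [hj2.2.1] at h1
    simp at h1

private lemma psum_ew (q N : ℕ) (w : Fin N → Bool) (i : ℕ) (hi : i ≤ N) :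
    psum q (ew N w) i
      = ((Finset.univ.filter (fun j : Fin N => (j : ℕ) < i ∧ w j = false)).card : ℤ)
        - q * ((Finset.univ.filter (fun j : Fin N => (j : ℕ) < i ∧ w j = true)).card : ℤ) := by
  induction i with
  | zero => simp [psum]
  | succ i ih =>
    have hi' : i ≤ N := by omega
    have hiN : i < N := by omega
    rw [psum_succ, ih hi', count_step N (fun j => w j = false) i hiN,
      count_step N (fun j => w j = true) i hiN]
    have hew : ew N w i = w ⟨i, hiN⟩ := by unfold ew; rw [dif_pos hiN]
    unfold stp
    rw [hew]
    cases hwi : w ⟨i, hiN⟩ <;> simp [hwi] <;> push_cast <;> ring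

private def fW (N : ℕ) (w : Fin N → Bool) : Fin (N + 1) → Bool :=
  fun k => if h : (k : ℕ) = 0 then false else
    w ⟨N - (k : ℕ), by have := k.isLt; omega⟩

private def gW (N : ℕ) (u : Fin (N + 1) → Bool) : Fin N → Bool :=
  fun j => u ⟨N - (j : ℕ), by have := j.isLt; omega⟩

private lemma gW_fW (N : ℕ) (w : Fin N → Bool) : gW N (fW N w) = w := by
  funext j
  unfold gW fW
  have hj := j.isLt
  rw [dif_neg (by simp; omega)]
  congr 1
  exact Fin.ext (by simp; omega)

private lemma fW_gW (N : ℕ) (u : Fin (N + 1) → Bool) (h0 : u 0 = false) :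
    fW N (gW N u) = u := by
  funext k
  unfold fW gW
  by_cases hk : (k : ℕ) = 0
  · rw [dif_pos hk, ← h0]
    congr 1
    exact Fin.ext (by simp [hk])
  · rw [dif_neg hk]
    congr 1
    have := k.isLt
    exact Fin.ext (by simp; omega)

private lemma psum_fW (q N : ℕ) (w : Fin N → Bool) (l : ℕ) (hl : l ≤ N) :
    psum q (ev N (fW N w)) (l + 1)
      = 1 + psum q (ew N w) N - psum q (ew N w) (N - l) := by
  induction l with
  | zero =>
    have h1 : psum q (ev N (fW N w)) 1 = stp q (ev N (fW N w)) 0 := by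
      unfold psum
      rw [Finset.sum_range_one]
    rw [h1]
    have h2 : ev N (fW N w) 0 = false := by
      unfold ev fW
      simp
    unfold stp
    rw [h2]
    simp
  | succ l ih =>
    have hl' : l ≤ N := by omega
    rw [psum_succ, ih hl']
    have h1 : ev N (fW N w) (l + 1) = w ⟨N - (l + 1), by omega⟩ := by
      unfold ev fW
      have hmod : (l + 1) % (N + 1) = l + 1 := Nat.mod_eq_of_lt (by omega)
      simp only [hmod]
      rw [dif_neg (by simp)]
    have h3 : stp q (ev N (fW N w)) (l + 1) = stp q (ew N w) (N - (l + 1)) := by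
      unfold stp
      rw [h1]
      unfold ew
      rw [dif_pos (show N - (l + 1) < N by omega)]
    have hS : psum q (ew N w) (N - l)
        = psum q (ew N w) (N - (l + 1)) + stp q (ew N w) (N - (l + 1)) := by
      rw [show N - l = (N - (l + 1)) + 1 by omega]
      exact psum_succ _ _ _
    rw [h3, hS]
    ring

private lemma cntM_fW (q N : ℕ) (w : Fin N → Bool) :
    (Finset.univ.filter (fun i => fW N w i = true)).card
      = (Finset.univ.filter (fun i => w i = true)).card := by
  classical
  have h1 := total_ev q N (fW N w)
  have h2 := psum_fW q N w N (le_refl N)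
  rw [Nat.sub_self] at h2
  have h0 : psum q (ew N w) 0 = 0 := by simp [psum]
  rw [h0] at h2
  have h3 := psum_ew q N w N (le_refl N)
  -- counts at N
  have hRT : (Finset.univ.filter (fun j : Fin N => (j : ℕ) < N ∧ w j = true))
      = (Finset.univ.filter (fun j : Fin N => w j = true)) := by
    apply Finset.filter_congr
    intro j _
    simp [j.isLt]
  have hRF : (Finset.univ.filter (fun j : Fin N => (j : ℕ) < N ∧ w j = false))
      = (Finset.univ.filter (fun j : Fin N => w j = false)) := by
    apply Finset.filter_congr
    intro j _
    simp [j.isLt]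
  have hsplit : (Finset.univ.filter (fun j : Fin N => w j = true)).card
      + (Finset.univ.filter (fun j : Fin N => w j = false)).card = N := by
    have := Finset.card_filter_add_card_filter_not
      (s := (Finset.univ : Finset (Fin N))) (p := fun j => w j = true)
    simp only [Finset.card_univ, Fintype.card_fin] at this
    have h4 : (Finset.univ.filter (fun a : Fin N => ¬ w a = true))
        = (Finset.univ.filter (fun j : Fin N => w j = false)) := by
      apply Finset.filter_congr
      intro j _
      simp
    rw [h4] at this
    exact this
  rw [hRT, hRF] at h3
  rw [h3] at h2
  rw [h2] at h1
  -- h1 : 1 + (F - q*T) = (N+1) - cM * (q+1)  where F + T = N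
  have hcast : ((Finset.univ.filter (fun j : Fin N => w j = true)).card : ℤ)
      + ((Finset.univ.filter (fun j : Fin N => w j = false)).card : ℤ) = N := by
    exact_mod_cast hsplit
  have hq1 : ((Finset.univ.filter (fun i => fW N w i = true)).card : ℤ) * (q + 1)
      = ((Finset.univ.filter (fun j : Fin N => w j = true)).card : ℤ) * (q + 1) := by
    linear_combination h1 - hcast
  have hfin : ((Finset.univ.filter (fun i => fW N w i = true)).card : ℤ)
      = ((Finset.univ.filter (fun j : Fin N => w j = true)).card : ℤ) := by
    have hne : ((q : ℤ) + 1) ≠ 0 := by positivity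
    exact mul_right_cancel₀ hne hq1
  exact_mod_cast hfin

private lemma SN_eq (q N a n : ℕ) (hNq : N = n * q + n + a) (w : Fin N → Bool)
    (hcnt : (Finset.univ.filter (fun i => w i = true)).card = n) :
    psum q (ew N w) N = (a : ℤ) := by
  classical
  have h3 := psum_ew q N w N (le_refl N)
  have hRT : (Finset.univ.filter (fun j : Fin N => (j : ℕ) < N ∧ w j = true))
      = (Finset.univ.filter (fun j : Fin N => w j = true)) := by
    apply Finset.filter_congr
    intro j _
    simp [j.isLt]
  have hRF : (Finset.univ.filter (fun j : Fin N => (j : ℕ) < N ∧ w j = false))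
      = (Finset.univ.filter (fun j : Fin N => w j = false)) := by
    apply Finset.filter_congr
    intro j _
    simp [j.isLt]
  have hsplit : (Finset.univ.filter (fun j : Fin N => w j = true)).card
      + (Finset.univ.filter (fun j : Fin N => w j = false)).card = N := by
    have h5 := Finset.card_filter_add_card_filter_not
      (s := (Finset.univ : Finset (Fin N))) (p := fun j => w j = true)
    simp only [Finset.card_univ, Fintype.card_fin] at h5
    have h4 : (Finset.univ.filter (fun a : Fin N => ¬ w a = true))
        = (Finset.univ.filter (fun j : Fin N => w j = false)) := by
      apply Finset.filter_congr
      intro j _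
      simp
    rw [h4] at h5
    exact h5
  rw [hRT, hRF, hcnt] at h3
  have hF : (Finset.univ.filter (fun j : Fin N => w j = false)).card = N - n := by omega
  rw [hF] at h3
  rw [h3]
  have hNZ : (N : ℤ) = (n : ℤ) * q + n + a := by exact_mod_cast hNq
  have hnN : n ≤ N := by omega
  rw [Nat.cast_sub hnN]
  linear_combination hNZ

private lemma bridge (q N a n : ℕ) (hNq : N = n * q + n + a) (w : Fin N → Bool)
    (hcnt : (Finset.univ.filter (fun i => w i = true)).card = n) :
    (∀ i : ℕ, i ≤ N →
        ((Finset.univ.filter (fun j : Fin N => (j : ℕ) < i ∧ w j = false)).card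
          ≤ a + q * (Finset.univ.filter (fun j : Fin N => (j : ℕ) < i ∧ w j = true)).card))
      ↔ Pd q N (fW N w) := by
  classical
  have hSN := SN_eq q N a n hNq w hcnt
  constructor
  · intro hcond k hk
    rw [Finset.mem_Icc] at hk
    have hk1 : k = (k - 1) + 1 := by omega
    rw [hk1, psum_fW q N w (k - 1) (by omega), hSN]
    have hi : N - (k - 1) ≤ N := by omega
    have h3 := psum_ew q N w (N - (k - 1)) hi
    have hc := hcond (N - (k - 1)) hi
    have hc' : ((Finset.univ.filter
          (fun j : Fin N => (j : ℕ) < N - (k - 1) ∧ w j = false)).card : ℤ)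
        ≤ (a : ℤ) + (q : ℤ) * ((Finset.univ.filter
          (fun j : Fin N => (j : ℕ) < N - (k - 1) ∧ w j = true)).card : ℤ) := by
      exact_mod_cast hc
    linarith
  · intro hPd i hi
    have hk : (N - i) + 1 ∈ Finset.Icc 1 (N + 1) := Finset.mem_Icc.mpr ⟨by omega, by omega⟩
    have h1 := hPd _ hk
    rw [psum_fW q N w (N - i) (by omega), hSN, show N - (N - i) = i by omega] at h1
    have h3 := psum_ew q N w i hi
    have h4 : ((Finset.univ.filter (fun j : Fin N => (j : ℕ) < i ∧ w j = false)).card : ℤ)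
        ≤ (a : ℤ) + (q : ℤ) * ((Finset.univ.filter
          (fun j : Fin N => (j : ℕ) < i ∧ w j = true)).card : ℤ) := by
      linarith
    exact_mod_cast h4

private def Wcnt (n N : ℕ) : Finset (Fin (N + 1) → Bool) :=
  Finset.univ.filter (fun u => (Finset.univ.filter (fun i => u i = true)).card = n)

private def Wd (q n N : ℕ) : Finset (Fin (N + 1) → Bool) :=
  Finset.univ.filter (fun u =>
    (Finset.univ.filter (fun i => u i = true)).card = n ∧ Pd q N u)

private instance instDomDec2 (q N r : ℕ) : DecidablePred (fun u : Fin (N + 1) → Bool =>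
    ∀ k ∈ Finset.Icc 1 (N + 1), psum q (ev N u) r < psum q (ev N u) (r + k)) :=
  fun _ => Finset.decidableDforallFinset

private def WcntR (q n N r : ℕ) : Finset (Fin (N + 1) → Bool) :=
  @Finset.filter _ _ (instDomDec2 q N r) (Wcnt n N)

private def rotCount (q N : ℕ) (u : Fin (N + 1) → Bool) : ℕ :=
  (@Finset.filter ℕ _ (instDomDec q (N + 1) (ev N u)) (Finset.range (N + 1))).card

private def ind (q N r : ℕ) (u : Fin (N + 1) → Bool) : ℕ :=
  @ite ℕ _ (instDomDec q (N + 1) (ev N u) r) 1 0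

private lemma mem_Wcnt (n N : ℕ) (u : Fin (N + 1) → Bool) (hu : u ∈ Wcnt n N) :
    (Finset.univ.filter (fun i => u i = true)).card = n := by
  unfold Wcnt at hu
  exact (Finset.mem_filter.mp hu).2

private lemma L1 (q a n N : ℕ) (hq1 : 1 ≤ q) (hNq : N = n * q + n + a)
    (u : Fin (N + 1) → Bool) (hu : (Finset.univ.filter (fun i => u i = true)).card = n) :
    rotCount q N u = a + 1 := by
  unfold rotCount
  apply cycle_lemma q a (N + 1) (ev N u) hq1 (by omega) (ev_per N u)
  rw [total_ev, hu]
  have hNZ : (N : ℤ) = (n : ℤ) * q + n + a := by exact_mod_cast hNq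
  linear_combination hNZ

private lemma L2 (q N : ℕ) (u : Fin (N + 1) → Bool) :
    rotCount q N u = ∑ r ∈ Finset.range (N + 1), ind q N r u := by
  unfold rotCount ind
  exact Finset.card_filter _ _

private lemma L3 (q n N r : ℕ) :
    (WcntR q n N r).card = ∑ u ∈ Wcnt n N, ind q N r u := by
  unfold WcntR ind
  exact Finset.card_filter _ _

private lemma L4 (q n N r : ℕ) (hr : r < N + 1) :
    (WcntR q n N r).card = (Wd q n N).card := by
  unfold WcntR Wcnt Wd
  refine Finset.card_bij' (fun u _ => rotW N ⟨r, hr⟩ u) (fun u _ => rotW N (-⟨r, hr⟩) u)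
    ?_ ?_ ?_ ?_
  · intro u hu
    rw [Finset.mem_filter, Finset.mem_filter] at hu
    obtain ⟨⟨_, hcnt⟩, hP⟩ := hu
    rw [Finset.mem_filter]
    refine ⟨Finset.mem_univ _, ?_, ?_⟩
    · rw [cnt_rot]; exact hcnt
    · rw [rot_dom]; exact hP
  · intro u hu
    rw [Finset.mem_filter] at hu
    obtain ⟨_, hcnt, hP⟩ := hu
    rw [Finset.mem_filter, Finset.mem_filter]
    refine ⟨⟨Finset.mem_univ _, ?_⟩, ?_⟩
    · rw [cnt_rot]; exact hcnt
    · have h2 : Pd q N (rotW N ⟨r, hr⟩ (rotW N (-⟨r, hr⟩) u)) := by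
        rw [rotW_rotW, add_neg_cancel, rotW_zero]; exact hP
      rw [rot_dom] at h2
      exact h2
  · intro u _
    simp only [rotW_rotW, neg_add_cancel, rotW_zero]
  · intro u _
    simp only [rotW_rotW, add_neg_cancel, rotW_zero]

private lemma L6 (q a n N : ℕ) (hq1 : 1 ≤ q) (hNq : N = n * q + n + a) :
    ((Finset.univ.filter (fun w : Fin N → Bool =>
        (Finset.univ.filter (fun i => w i = true)).card = n ∧
        ∀ i : ℕ, i ≤ N →
          ((Finset.univ.filter (fun j : Fin N => (j : ℕ) < i ∧ w j = false)).card
            ≤ a + q *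
              (Finset.univ.filter (fun j : Fin N => (j : ℕ) < i ∧ w j = true)).card))).card)
      = (Wd q n N).card := by
  unfold Wd
  refine Finset.card_bij' (fun w _ => fW N w) (fun u _ => gW N u) ?_ ?_ ?_ ?_
  · intro w hw
    rw [Finset.mem_filter] at hw ⊢
    obtain ⟨_, hcnt, hcond⟩ := hw
    refine ⟨Finset.mem_univ _, ?_, ?_⟩
    · rw [cntM_fW q N w]; exact hcnt
    · exact (bridge q N a n hNq w hcnt).mp hcond
  · intro u hu
    rw [Finset.mem_filter] at hu
    obtain ⟨_, hcnt, hPd⟩ := hu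
    have h0 : u 0 = false := dom_zero q N hq1 u hPd
    have hfg : fW N (gW N u) = u := fW_gW N u h0
    have hcnt' : (Finset.univ.filter (fun i => gW N u i = true)).card = n := by
      have h3 := cntM_fW q N (gW N u)
      rw [hfg] at h3
      omega
    rw [Finset.mem_filter]
    refine ⟨Finset.mem_univ _, hcnt', ?_⟩
    apply (bridge q N a n hNq (gW N u) hcnt').mpr
    rw [hfg]
    exact hPd
  · intro w _
    exact gW_fW N w
  · intro u hu
    rw [Finset.mem_filter] at hu
    exact fW_gW N u (dom_zero q N hq1 u hu.2.2)

private lemma main_nat' (q a n N : ℕ) (hq1 : 1 ≤ q) (hNq : N = n * q + n + a) :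
    (a + 1) * ((N + 1).choose n)
      = (N + 1) *
        ((Finset.univ.filter (fun w : Fin N → Bool =>
          (Finset.univ.filter (fun i => w i = true)).card = n ∧
          ∀ i : ℕ, i ≤ N →
            ((Finset.univ.filter (fun j : Fin N => (j : ℕ) < i ∧ w j = false)).card
              ≤ a + q *
                (Finset.univ.filter (fun j : Fin N =>
                  (j : ℕ) < i ∧ w j = true)).card))).card) := by
  rw [L6 q a n N hq1 hNq]
  have hWcnt : (Wcnt n N).card = (N + 1).choose n := by
    unfold Wcnt
    exact card_count (N + 1) n
  calc (a + 1) * ((N + 1).choose n)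
      = ∑ u ∈ Wcnt n N, rotCount q N u := by
        rw [Finset.sum_congr rfl (fun u hu => L1 q a n N hq1 hNq u (mem_Wcnt n N u hu)),
          Finset.sum_const, hWcnt, smul_eq_mul]
        ring
    _ = ∑ u ∈ Wcnt n N, ∑ r ∈ Finset.range (N + 1), ind q N r u :=
        Finset.sum_congr rfl (fun u _ => L2 q N u)
    _ = ∑ r ∈ Finset.range (N + 1), ∑ u ∈ Wcnt n N, ind q N r u := Finset.sum_comm
    _ = ∑ _r ∈ Finset.range (N + 1), (Wd q n N).card := by
        refine Finset.sum_congr rfl (fun r hr => ?_)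
        rw [← L3 q n N r]
        exact L4 q n N r (Finset.mem_range.mp hr)
    _ = (N + 1) * (Wd q n N).card := by
        rw [Finset.sum_const, Finset.card_range, smul_eq_mul]

private lemma main_nat (t a n : ℕ) (ht : 2 ≤ t) :
    (a + 1) * ((n * t + a + 1).choose n)
      = (n * t + a + 1) *
        ((Finset.univ.filter (fun w : Fin (n * t + a) → Bool =>
          (Finset.univ.filter (fun i => w i = true)).card = n ∧
          ∀ i : ℕ, i ≤ n * t + a →
            ((Finset.univ.filter (fun j : Fin (n * t + a) => (j : ℕ) < i ∧ w j = false)).card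
              ≤ a + (t - 1) *
                (Finset.univ.filter (fun j : Fin (n * t + a) =>
                  (j : ℕ) < i ∧ w j = true)).card))).card) := by
  have hmul : n * t = n * (t - 1) + n := by
    rw [← Nat.mul_succ]
    congr 1
    omega
  exact main_nat' (t - 1) a n (n * t + a) (by omega) (by omega)

private lemma rat_step (t a n : ℕ) (ht : 2 ≤ t) (G : ℕ)
    (h : (a + 1) * ((n * t + a + 1).choose n) = (n * t + a + 1) * G) :
    (G : ℚ) = ((a : ℚ) + 1) / (n * (t - 1) + a + 1) * (Nat.choose (n * t + a) n : ℚ) := by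
  have hmul : n * t = n * (t - 1) + n := by
    rw [← Nat.mul_succ]
    congr 1
    omega
  set N := n * t + a with hN
  set K := n * (t - 1) + a + 1 with hK
  have hKN : K = N + 1 - n := by omega
  have hchoose := Nat.choose_mul_succ_eq N n
  -- N.choose n * (N + 1) = (N + 1).choose n * (N + 1 - n)
  rw [← hKN] at hchoose
  have hfin : (a + 1) * (N.choose n) = G * K := by
    apply Nat.eq_of_mul_eq_mul_left (show 0 < N + 1 by omega)
    calc (N + 1) * ((a + 1) * N.choose n) = (a + 1) * (N.choose n * (N + 1)) := by ring
      _ = (a + 1) * ((N + 1).choose n * K) := by rw [hchoose]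
      _ = ((a + 1) * ((N + 1).choose n)) * K := by ring
      _ = ((N + 1) * G) * K := by rw [h]
      _ = (N + 1) * (G * K) := by ring
  have hq' : ((t : ℚ) - 1) = ((t - 1 : ℕ) : ℚ) := by
    rw [Nat.cast_sub (by omega : 1 ≤ t)]
    simp
  rw [hq']
  have hKQ : (n : ℚ) * ((t - 1 : ℕ) : ℚ) + (a : ℚ) + 1 = (K : ℚ) := by
    rw [hK]
    push_cast
    ring
  rw [hKQ]
  have hK0 : (K : ℚ) ≠ 0 := by
    have : 0 < K := by omega
    exact_mod_cast this.ne'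
  rw [div_mul_eq_mul_div, eq_div_iff hK0]
  have hfinQ : ((a : ℚ) + 1) * (N.choose n : ℚ) = (G : ℚ) * (K : ℚ) := by
    exact_mod_cast hfin
  linarith [hfinQ]

/-- Lattice paths with unit steps right `(1,0)` (encoded `true`) and up `(0,1)`
(encoded `false`).  A path from `(0,0)` to `(n, n(t-1)+a)` consists of
`n + (n(t-1)+a) = nt+a` steps; it stays (weakly) below the line `y = a + (t-1)x`
if after every initial segment of `i` steps the point `(x,y)` reached, where
`x` is the number of right-steps and `y` the number of up-steps so far,
satisfies `y ≤ a + (t-1)x`.  The number of such paths is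
`(a+1)/(n(t-1)+a+1) · C(nt+a, n)`. -/
theorem card_lattice_paths_below_line (t a n : ℕ) (ht : 2 ≤ t) :
    ((Finset.univ.filter (fun w : Fin (n * t + a) → Bool =>
        -- endpoint: exactly `n` right-steps (hence `n(t-1)+a` up-steps)
        (Finset.univ.filter (fun i => w i = true)).card = n ∧
        -- stay on or below the line `y = a + (t-1)x` at every step
        ∀ i : ℕ, i ≤ n * t + a →
          ((Finset.univ.filter (fun j : Fin (n * t + a) => (j : ℕ) < i ∧ w j = false)).card
            ≤ a + (t - 1) *
              (Finset.univ.filter (fun j : Fin (n * t + a) => (j : ℕ) < i ∧ w j = true)).card))).card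
      : ℚ) =
      ((a : ℚ) + 1) / (n * (t - 1) + a + 1) * (Nat.choose (n * t + a) n : ℚ) := by
  exact rat_step t a n ht _ (main_nat t a n ht)
end

section
/- Let t ≥ 2 be an integer. The number of lattice paths with steps (0,1) and (1,0) from (0,0) to (k,n) with n > tk that never touch the line y = tx except at the origin equals (n - tk)·C(n+k, n)/(n+k). -/
namespace Barbier

open Finset
open Fin.NatCast

def psum (e : ℕ → ℤ) (i : ℕ) : ℤ := ∑ j ∈ Finset.range i, e j

lemma psum_zero (e : ℕ → ℤ) : psum e 0 = 0 := by simp [psum]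

lemma psum_succ (e : ℕ → ℤ) (i : ℕ) : psum e (i + 1) = psum e i + e i :=
  Finset.sum_range_succ e i

lemma psum_shift (e : ℕ → ℤ) (r : ℕ) :
    ∀ i, psum (fun j => e (j + r)) i = psum e (r + i) - psum e r
  | 0 => by simp [psum]
  | (i + 1) => by
      rw [psum_succ, psum_shift e r i, ← Nat.add_assoc, psum_succ, Nat.add_comm i r]
      ring

section words

variable (t : ℕ) {N : ℕ} [NeZero N]

/-- Step sequence of a word, extended `N`-periodically to all of `ℕ`. -/
def stepf (w : Fin N → Bool) : ℕ → ℤ :=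
  fun j => if w (j : Fin N) = true then -(t : ℤ) else 1

lemma stepf_period (w : Fin N → Bool) (j : ℕ) : stepf t w (j + N) = stepf t w j := by
  unfold stepf
  congr 2
  push_cast [Fin.natCast_self]
  rw [add_zero]

lemma stepf_le (w : Fin N → Bool) (j : ℕ) : stepf t w j ≤ 1 := by
  unfold stepf
  split
  · have : (0:ℤ) ≤ (t:ℤ) := Int.natCast_nonneg t
    omega
  · exact le_refl 1

/-- Rotation of a word by `r` positions. -/
def rot (r : ℕ) (w : Fin N → Bool) : Fin N → Bool :=
  fun i => w (i + (r : Fin N))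

lemma stepf_rot (r : ℕ) (w : Fin N → Bool) (j : ℕ) :
    stepf t (rot r w) j = stepf t w (j + r) := by
  unfold stepf rot
  congr 2
  push_cast
  ring

lemma rot_rot (r : ℕ) (hr : r ≤ N) (w : Fin N → Bool) : rot r (rot (N - r) w) = w := by
  funext i
  unfold rot
  congr 1
  have : (r : Fin N) + ((N - r : ℕ) : Fin N) = 0 := by
    have h : (r : Fin N) + ((N - r : ℕ) : Fin N) = ((r + (N - r) : ℕ) : Fin N) := by push_cast; ring
    rw [h, Nat.add_sub_cancel' hr, Fin.natCast_self]
  rw [add_assoc, this, add_zero]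

lemma rot_rot' (r : ℕ) (hr : r ≤ N) (w : Fin N → Bool) : rot (N - r) (rot r w) = w := by
  funext i
  unfold rot
  congr 1
  have : ((N - r : ℕ) : Fin N) + (r : Fin N) = 0 := by
    have h : ((N - r : ℕ) : Fin N) + (r : Fin N) = ((N - r + r : ℕ) : Fin N) := by push_cast; ring
    rw [h, Nat.sub_add_cancel hr, Fin.natCast_self]
  rw [add_assoc, this, add_zero]

/-- The count of `b`-valued letters in a prefix, as a `range` filter. -/
lemma card_prefix (w : Fin N → Bool) (i : ℕ) (hi : i ≤ N) (b : Bool) :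
    (Finset.univ.filter (fun j : Fin N => (j : ℕ) < i ∧ w j = b)).card
      = ((Finset.range i).filter (fun j : ℕ => w (j : Fin N) = b)).card := by
  apply Finset.card_bij (fun (j : Fin N) _ => (j : ℕ))
  · intro j hj
    simp only [Finset.mem_filter, Finset.mem_univ, true_and] at hj
    simp only [Finset.mem_filter, Finset.mem_range]
    exact ⟨hj.1, by rw [Fin.cast_val_eq_self]; exact hj.2⟩
  · intro a _ b_ _ h
    exact Fin.val_injective h
  · intro j hj
    simp only [Finset.mem_filter, Finset.mem_range] at hj
    refine ⟨⟨j, lt_of_lt_of_le hj.1 hi⟩, ?_, rfl⟩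
    simp only [Finset.mem_filter, Finset.mem_univ, true_and]
    refine ⟨hj.1, ?_⟩
    have : (j : Fin N) = ⟨j, lt_of_lt_of_le hj.1 hi⟩ := by
      apply Fin.ext
      exact Fin.val_cast_of_lt (lt_of_lt_of_le hj.1 hi)
    rw [← this]
    exact hj.2

lemma psum_stepf_range (w : Fin N → Bool) :
    ∀ i, psum (stepf t w) i
      = ((((Finset.range i).filter (fun j : ℕ => w (j : Fin N) = false)).card : ℤ))
        - t * (((Finset.range i).filter (fun j : ℕ => w (j : Fin N) = true)).card : ℤ)
  | 0 => by simp [psum]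
  | (i + 1) => by
      rw [psum_succ, psum_stepf_range w i]
      rcases h : w ((i : ℕ) : Fin N) with _ | _
      · simp [Finset.range_add_one, Finset.filter_insert, h, stepf]
        push_cast
        ring
      · simp [Finset.range_add_one, Finset.filter_insert, h, stepf]
        push_cast
        ring

lemma psum_stepf (w : Fin N → Bool) (i : ℕ) (hi : i ≤ N) :
    psum (stepf t w) i
      = ((Finset.univ.filter (fun j : Fin N => (j : ℕ) < i ∧ w j = false)).card : ℤ)
        - t * ((Finset.univ.filter (fun j : Fin N => (j : ℕ) < i ∧ w j = true)).card : ℤ) := by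
  rw [card_prefix w i hi false, card_prefix w i hi true, psum_stepf_range]

end words

variable {e : ℕ → ℤ} {N : ℕ}

lemma psum_period (hper : ∀ j, e (j + N) = e j) :
    ∀ i, psum e (N + i) = psum e N + psum e i
  | 0 => by simp [psum]
  | (i + 1) => by
      rw [← Nat.add_assoc, psum_succ, psum_period hper i, Nat.add_comm N i, hper, psum_succ]
      ring

lemma ivt (hstep : ∀ j, e j ≤ 1) {a : ℕ} {v : ℤ} :
    ∀ {b : ℕ}, a ≤ b → psum e a < v → v ≤ psum e b → ∃ c, a < c ∧ c ≤ b ∧ psum e c = v := by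
  intro b
  induction b with
  | zero =>
      intro hab ha hb
      have h0 : a = 0 := by omega
      subst h0
      omega
  | succ b ih =>
      intro hab ha hb
      rcases Nat.lt_or_ge a (b+1) with h | h
      · have hab' : a ≤ b := by omega
        rcases le_or_gt v (psum e b) with h2 | h2
        · obtain ⟨c, hc1, hc2, hc3⟩ := ih hab' ha h2
          exact ⟨c, hc1, by omega, hc3⟩
        · have h3 := psum_succ e b
          have h4 := hstep b
          have : psum e (b+1) = v := by omega
          exact ⟨b+1, by omega, le_refl _, this⟩
      · have h0 : a = b + 1 := by omega
        subst h0
        omega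

open Classical in
/-- The cycle lemma: for a periodic step sequence with steps `≤ 1` and positive
period-sum, exactly `(psum e N).toNat` of the `N` rotations have all partial sums
avoiding the starting value. -/
theorem cycle_count (hper : ∀ j, e (j + N) = e j) (hstep : ∀ j, e j ≤ 1)
    (hN : 0 < N) (hpos : 0 < psum e N) :
    ((Finset.range N).filter
        (fun r => ∀ i ∈ Finset.Icc 1 N, psum e (r + i) ≠ psum e r)).card
      = (psum e N).toNat := by
  have hne : ((Finset.range (2*N+1)).image (psum e)).Nonempty :=
    ⟨psum e 0, Finset.mem_image.2 ⟨0, Finset.mem_range.2 (by omega), rfl⟩⟩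
  set m := ((Finset.range (2*N+1)).image (psum e)).min' hne with hm
  have hmin : ∀ j, j ≤ 2*N → m ≤ psum e j := by
    intro j hj
    exact Finset.min'_le _ _ (Finset.mem_image.2 ⟨j, Finset.mem_range.2 (by omega), rfl⟩)
  obtain ⟨j0, hj0mem, hj0⟩ := Finset.mem_image.1 (Finset.min'_mem _ hne)
  have hj0le : j0 ≤ 2*N := by have := Finset.mem_range.1 hj0mem; omega
  have hm0 : m ≤ 0 := by
    have h1 := hmin 0 (by omega); have h0 : psum e 0 = 0 := psum_zero e
    omega
  have hper' : ∀ i, psum e (N + i) = psum e N + psum e i := fun i => psum_period hper i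
  have hG2N : psum e (2*N) = psum e N + psum e N := by
    have h := hper' N; rw [Nat.two_mul]; omega
  -- the minimum is attained at some r0 ≤ N
  have hr0 : ∃ r0, r0 ≤ N ∧ psum e r0 = m := by
    rcases le_or_gt j0 N with h | h
    · exact ⟨j0, h, hj0⟩
    · refine ⟨j0 - N, by omega, ?_⟩
      have h1 : psum e (N + (j0 - N)) = psum e N + psum e (j0 - N) := hper' _
      have h2 : N + (j0 - N) = j0 := by omega
      rw [h2] at h1
      have h3 := hmin (j0 - N) (by omega)
      omega
  obtain ⟨r0, hr0N, hr0m⟩ := hr0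
  classical
  set φ : ℤ → ℕ := fun v => Nat.findGreatest (fun j => psum e j ≤ v) (2*N) with hφ
  have hφle : ∀ v, φ v ≤ 2*N := fun v => Nat.findGreatest_le _
  have hφspec : ∀ v, m ≤ v → psum e (φ v) ≤ v := by
    intro v hv
    exact Nat.findGreatest_spec (P := fun j => psum e j ≤ v) (by omega : r0 ≤ 2*N) (by omega)
  have hφgt : ∀ v j, φ v < j → j ≤ 2*N → v < psum e j := by
    intro v j h1 h2
    have := Nat.findGreatest_is_greatest (P := fun j => psum e j ≤ v) h1 h2
    omega
  have hφval : ∀ v, m ≤ v → v < m + psum e N → psum e (φ v) = v := by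
    intro v hv1 hv2
    rcases Nat.lt_or_ge (φ v) (2*N) with h | h
    · have h1 := hφgt v (φ v + 1) (by omega) (by omega)
      have h2 := psum_succ e (φ v)
      have h3 := hstep (φ v)
      have h4 := hφspec v hv1
      omega
    · have h5 : φ v = 2*N := le_antisymm (hφle v) h
      have h6 := hφspec v hv1
      rw [h5] at h6
      omega
  have hφlt : ∀ v, m ≤ v → v < m + psum e N → φ v < N := by
    intro v hv1 hv2
    by_contra h
    push_neg at h
    have h1 : psum e (N + (φ v - N)) = psum e N + psum e (φ v - N) := hper' _
    have h2 : N + (φ v - N) = φ v := by omega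
    rw [h2] at h1
    have h3 := hmin (φ v - N) (by have := hφle v; omega)
    have h4 := hφval v hv1 hv2
    omega
  -- goodness implies strict inequality on (r, 2N]
  have hBC : ∀ r, r < N → (∀ i ∈ Finset.Icc 1 N, psum e (r + i) ≠ psum e r) →
      ∀ j, r < j → j ≤ 2*N → psum e r < psum e j := by
    intro r hrN hA
    have hA' : ∀ i, 1 ≤ i → i ≤ N → psum e (r + i) ≠ psum e r := by
      intro i h1 h2; exact hA i (Finset.mem_Icc.2 ⟨h1, h2⟩)
    have hB : ∀ i, 1 ≤ i → i ≤ N → psum e r < psum e (r + i) := by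
      intro i h1 h2
      by_contra hc
      push_neg at hc
      have hlt : psum e (r + i) < psum e r :=
        lt_of_le_of_ne hc (hA' i h1 h2)
      have hrNval : psum e (N + r) = psum e N + psum e r := hper' r
      rw [Nat.add_comm N r] at hrNval
      have hrN' : psum e r ≤ psum e (r + N) := by omega
      obtain ⟨c, hc1, hc2, hc3⟩ := ivt hstep (a := r + i) (v := psum e r)
        (by omega : r + i ≤ r + N) hlt hrN'
      have hA2 : psum e (r + (c - r)) ≠ psum e r := hA' (c - r) (by omega) (by omega)
      have hcr : r + (c - r) = c := by omega
      rw [hcr] at hA2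
      exact hA2 hc3
    intro j h1 h2
    rcases le_or_gt j (r + N) with h | h
    · have h3 := hB (j - r) (by omega) (by omega)
      have hj : r + (j - r) = j := by omega
      rwa [hj] at h3
    · have h3 := hB (j - N - r) (by omega) (by omega)
      have h4 : r + (j - N - r) = j - N := by omega
      rw [h4] at h3
      have h5 : psum e (N + (j - N)) = psum e N + psum e (j - N) := hper' _
      have h6 : N + (j - N) = j := by omega
      rw [h6] at h5
      omega
  rw [show (psum e N).toNat = (Finset.Ico m (m + psum e N)).card by
        rw [Int.card_Ico]; congr 1; omega]
  apply Finset.card_bij' (fun r _ => psum e r) (fun v _ => φ v)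
  · intro r hr
    simp only [Finset.mem_filter, Finset.mem_range] at hr
    obtain ⟨hrN, hA⟩ := hr
    have hC := hBC r hrN hA
    refine Finset.mem_Ico.2 ⟨hmin r (by omega), ?_⟩
    have h1 := hC (r0 + N) (by omega) (by omega)
    have h2 : psum e (N + r0) = psum e N + psum e r0 := hper' _
    rw [Nat.add_comm N r0] at h2
    omega
  · intro v hv
    rw [Finset.mem_Ico] at hv
    obtain ⟨hv1, hv2⟩ := hv
    have h1 := hφlt v hv1 hv2
    have h2 := hφval v hv1 hv2
    simp only [Finset.mem_filter, Finset.mem_range]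
    refine ⟨h1, ?_⟩
    intro i hi
    rw [Finset.mem_Icc] at hi
    have := hφgt v (φ v + i) (by omega) (by omega)
    omega
  · intro r hr
    simp only [Finset.mem_filter, Finset.mem_range] at hr
    obtain ⟨hrN, hA⟩ := hr
    have hC := hBC r hrN hA
    have h1 : r ≤ φ (psum e r) :=
      Nat.le_findGreatest (by omega) (le_refl _)
    rcases Nat.lt_or_ge r (φ (psum e r)) with h | h
    · have h2 := hC (φ (psum e r)) h (hφle _)
      have h3 : m ≤ psum e r := hmin r (by omega)
      have h4 := hφspec (psum e r) h3
      omega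
    · omega
  · intro v hv
    rw [Finset.mem_Ico] at hv
    exact hφval v hv.1 hv.2


section count

variable (t : ℕ) {k n : ℕ}

lemma count_false_full {N : ℕ} (w : Fin N → Bool)
    (hk : (Finset.univ.filter (fun i => w i = true)).card = k) :
    (Finset.univ.filter (fun i : Fin N => w i = false)).card = N - k := by
  have h := Finset.card_filter_add_card_filter_not (s := (Finset.univ : Finset (Fin N)))
    (p := fun i => w i = true)
  have h2 : (Finset.univ.filter (fun i : Fin N => ¬ (w i = true)))
      = Finset.univ.filter (fun i : Fin N => w i = false) := by
    apply Finset.filter_congr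
    intro x _
    simp
  rw [h2, hk] at h
  simp only [Finset.card_univ, Fintype.card_fin] at h
  omega

lemma card_trues_le {N : ℕ} (w : Fin N → Bool)
    (hk : (Finset.univ.filter (fun i => w i = true)).card = k) : k ≤ N := by
  rw [← hk]
  calc (Finset.univ.filter (fun i => w i = true)).card ≤ Finset.univ.card :=
        Finset.card_filter_le _ _
    _ = N := by simp

/-- The total step sum of a word with `k` trues out of `N = k + n`. -/
lemma psum_total {N : ℕ} [NeZero N] (w : Fin N → Bool)
    (hk : (Finset.univ.filter (fun i => w i = true)).card = k) :
    psum (stepf t w) N = ((N - k : ℕ) : ℤ) - t * k := by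
  rw [psum_stepf t w N (le_refl N)]
  have h1 : (Finset.univ.filter (fun j : Fin N => (j : ℕ) < N ∧ w j = false))
      = Finset.univ.filter (fun j : Fin N => w j = false) := by
    apply Finset.filter_congr
    intro x _
    simp [x.isLt]
  have h2 : (Finset.univ.filter (fun j : Fin N => (j : ℕ) < N ∧ w j = true))
      = Finset.univ.filter (fun j : Fin N => w j = true) := by
    apply Finset.filter_congr
    intro x _
    simp [x.isLt]
  rw [h1, h2, hk, count_false_full w hk]

/-- Rotating a word does not change the number of trues. -/
lemma card_trues_rot {N : ℕ} [NeZero N] (r : ℕ) (w : Fin N → Bool) :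
    (Finset.univ.filter (fun i => rot r w i = true)).card
      = (Finset.univ.filter (fun i => w i = true)).card := by
  apply Finset.card_bij' (fun (i : Fin N) _ => i + (r : Fin N))
    (fun (i : Fin N) _ => i - (r : Fin N))
  · intro a ha
    simp only [Finset.mem_filter, Finset.mem_univ, true_and] at ha ⊢
    exact ha
  · intro a ha
    simp only [Finset.mem_filter, Finset.mem_univ, true_and] at ha ⊢
    show w (a - (r : Fin N) + (r : Fin N)) = true
    rwa [sub_add_cancel]
  · intro a _
    exact add_sub_cancel_right a _
  · intro a _
    exact sub_add_cancel a _

/-- The goodness condition of the theorem, for a word. -/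
def good {N : ℕ} (w : Fin N → Bool) : Prop :=
  ∀ i : ℕ, 1 ≤ i → i ≤ N →
    ((Finset.univ.filter (fun j : Fin N => (j : ℕ) < i ∧ w j = false)).card
      ≠ t * (Finset.univ.filter (fun j : Fin N => (j : ℕ) < i ∧ w j = true)).card)

instance {N : ℕ} (w : Fin N → Bool) : Decidable (good t w) := by
  unfold good; infer_instance

lemma good_rot_iff {N : ℕ} [NeZero N] (r : ℕ) (w : Fin N → Bool) :
    good t (rot r w) ↔
      ∀ i ∈ Finset.Icc 1 N, psum (stepf t w) (r + i) ≠ psum (stepf t w) r := by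
  have key : ∀ i : ℕ, i ≤ N →
      (psum (stepf t (rot r w)) i = psum (stepf t w) (r + i) - psum (stepf t w) r) := by
    intro i _
    have h1 : stepf t (rot r w) = fun j => stepf t w (j + r) := by
      funext j; exact stepf_rot t r w j
    rw [h1, psum_shift]
  constructor
  · intro hg i hi
    rw [Finset.mem_Icc] at hi
    have h2 := hg i hi.1 hi.2
    intro hc
    apply h2
    have h4 : psum (stepf t (rot r w)) i = 0 := by rw [key i hi.2]; omega
    rw [psum_stepf t (rot r w) i hi.2] at h4
    omega
  · intro hg i hi1 hi2
    have h2 := hg i (Finset.mem_Icc.2 ⟨hi1, hi2⟩)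
    have h3 : psum (stepf t (rot r w)) i ≠ 0 := by
      rw [key i hi2]
      omega
    rw [psum_stepf t (rot r w) i hi2] at h3
    omega

/-- Cycle lemma applied to a word: the number of good rotations. -/
lemma card_good_rot {N : ℕ} [NeZero N] (hN : 0 < N) (w : Fin N → Bool)
    (hk : (Finset.univ.filter (fun i => w i = true)).card = k) (hkn : t * k < N - k) :
    ((Finset.range N).filter (fun r => good t (rot r w))).card = N - k - t * k := by
  classical
  have hkN : k ≤ N := card_trues_le w hk
  have htot : psum (stepf t w) N = ((N - k : ℕ) : ℤ) - t * k := psum_total t w hk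
  have hpos : 0 < psum (stepf t w) N := by rw [htot]; push_cast; omega
  have heq : ((Finset.range N).filter (fun r => good t (rot r w))).card
      = ((Finset.range N).filter
          (fun r => ∀ i ∈ Finset.Icc 1 N, psum (stepf t w) (r + i) ≠ psum (stepf t w) r)).card := by
    apply Finset.card_bij' (fun r _ => r) (fun r _ => r)
    · intro r hr
      simp only [Finset.mem_filter, Finset.mem_range] at hr ⊢
      exact ⟨hr.1, (good_rot_iff t r w).1 hr.2⟩
    · intro r hr
      simp only [Finset.mem_filter, Finset.mem_range] at hr ⊢
      exact ⟨hr.1, (good_rot_iff t r w).2 hr.2⟩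
    · intro r _; rfl
    · intro r _; rfl
  rw [heq, cycle_count (stepf_period t w) (stepf_le t w) hN hpos, htot]
  push_cast
  omega

lemma card_words (N k : ℕ) :
    (Finset.univ.filter (fun w : Fin N → Bool =>
      (Finset.univ.filter (fun i => w i = true)).card = k)).card = N.choose k := by
  classical
  have h : (Finset.powersetCard k (Finset.univ : Finset (Fin N))).card = N.choose k := by
    rw [Finset.card_powersetCard]
    simp
  rw [← h]
  apply Finset.card_bij' (fun w _ => Finset.univ.filter (fun i => w i = true))
    (fun s _ => fun i => decide (i ∈ s))
  · intro w _
    funext i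
    by_cases h : w i = true
    · simp [h]
    · simp only [Bool.not_eq_true] at h
      simp [h]
  · intro s _
    ext i
    simp
  · intro w hw
    simp only [Finset.mem_filter, Finset.mem_univ, true_and] at hw
    exact Finset.mem_powersetCard_univ.2 hw
  · intro s hs
    simp only [Finset.mem_filter, Finset.mem_univ, true_and]
    rw [← Finset.mem_powersetCard_univ.1 hs]
    congr 1
    ext i
    simp

lemma main_count {N : ℕ} [NeZero N] (t k : ℕ) (hN : 0 < N) (hkn : t * k < N - k) :
    N * (Finset.univ.filter (fun w : Fin N → Bool =>
        (Finset.univ.filter (fun i => w i = true)).card = k ∧ good t w)).card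
      = N.choose k * (N - k - t * k) := by
  classical
  set A := Finset.univ.filter (fun w : Fin N → Bool =>
      (Finset.univ.filter (fun i => w i = true)).card = k ∧ good t w) with hA
  have step3 : ∀ r, r < N →
      (Finset.univ.filter (fun w : Fin N → Bool =>
        (Finset.univ.filter (fun i => w i = true)).card = k ∧ good t (rot r w))).card
      = A.card := by
    intro r hr
    have hrN : r ≤ N := le_of_lt hr
    apply Finset.card_bij' (fun w _ => rot r w) (fun u _ => rot (N - r) u)
    · intro w _
      exact rot_rot' r hrN w
    · intro u _
      exact rot_rot r hrN u
    · intro w hw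
      simp only [Finset.mem_filter, Finset.mem_univ, true_and] at hw
      simp only [hA, Finset.mem_filter, Finset.mem_univ, true_and]
      exact ⟨by rw [card_trues_rot]; exact hw.1, hw.2⟩
    · intro u hu
      simp only [hA, Finset.mem_filter, Finset.mem_univ, true_and] at hu
      simp only [Finset.mem_filter, Finset.mem_univ, true_and]
      constructor
      · rw [card_trues_rot]; exact hu.1
      · rw [rot_rot r hrN u]; exact hu.2
  have swap : ∑ r ∈ Finset.range N,
      (Finset.univ.filter (fun w : Fin N → Bool =>
        (Finset.univ.filter (fun i => w i = true)).card = k ∧ good t (rot r w))).card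
      = ∑ w : Fin N → Bool, ∑ r ∈ Finset.range N,
          (if (Finset.univ.filter (fun i => w i = true)).card = k ∧ good t (rot r w)
            then 1 else 0) := by
    rw [Finset.sum_comm]
    apply Finset.sum_congr rfl
    intro r _
    rw [Finset.card_filter]
  have inner : ∀ w : Fin N → Bool,
      (∑ r ∈ Finset.range N,
        (if (Finset.univ.filter (fun i => w i = true)).card = k ∧ good t (rot r w)
          then 1 else 0))
      = (if (Finset.univ.filter (fun i => w i = true)).card = k
          then N - k - t * k else 0) := by
    intro w
    by_cases hw : (Finset.univ.filter (fun i => w i = true)).card = k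
    · simp only [hw, true_and, if_true]
      rw [← Finset.card_filter]
      exact card_good_rot t hN w hw hkn
    · simp [hw]
  calc N * A.card = ∑ _r ∈ Finset.range N, A.card := by
        rw [Finset.sum_const, Finset.card_range, smul_eq_mul]
    _ = ∑ r ∈ Finset.range N,
        (Finset.univ.filter (fun w : Fin N → Bool =>
          (Finset.univ.filter (fun i => w i = true)).card = k ∧ good t (rot r w))).card := by
        apply Finset.sum_congr rfl
        intro r hr
        rw [step3 r (Finset.mem_range.1 hr)]
    _ = ∑ w : Fin N → Bool,
          (if (Finset.univ.filter (fun i => w i = true)).card = k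
            then N - k - t * k else 0) := by
        rw [swap]
        apply Finset.sum_congr rfl
        intro w _
        exact inner w
    _ = ∑ w ∈ Finset.univ.filter (fun w : Fin N → Bool =>
          (Finset.univ.filter (fun i => w i = true)).card = k), (N - k - t * k) := by
        rw [Finset.sum_filter]
    _ = N.choose k * (N - k - t * k) := by
        rw [Finset.sum_const, smul_eq_mul, card_words]

end count

end Barbier


/-- Barbier's theorem (t-ballot problem).  Lattice paths with unit steps right
`(1,0)` (encoded `true`) and up `(0,1)` (encoded `false`) from `(0,0)` to
`(k,n)` with `n > tk`, that never touch the line `y = tx` except at the origin,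
number `(n - tk)·C(n+k, n)/(n+k)`.  After `i` steps the path is at the point
`(x,y)` where `x` is the number of right-steps and `y` the number of up-steps
among the first `i` steps. -/
theorem card_lattice_paths_avoiding_line (t k n : ℕ) (ht : 2 ≤ t) (hn : t * k < n) :
    ((Finset.univ.filter (fun w : Fin (k + n) → Bool =>
        -- endpoint: exactly `k` right-steps (hence `n` up-steps)
        (Finset.univ.filter (fun i => w i = true)).card = k ∧
        -- never touch the line `y = tx` except at the origin
        ∀ i : ℕ, 1 ≤ i → i ≤ k + n →
          ((Finset.univ.filter (fun j : Fin (k + n) => (j : ℕ) < i ∧ w j = false)).card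
            ≠ t *
              (Finset.univ.filter (fun j : Fin (k + n) => (j : ℕ) < i ∧ w j = true)).card))).card
      : ℚ) =
      ((n : ℚ) - t * k) * (Nat.choose (n + k) n : ℚ) / (n + k) := by
  classical
  haveI : NeZero (k + n) := ⟨by omega⟩
  have hset : (Finset.univ.filter (fun w : Fin (k + n) → Bool =>
        (Finset.univ.filter (fun i => w i = true)).card = k ∧
        ∀ i : ℕ, 1 ≤ i → i ≤ k + n →
          ((Finset.univ.filter (fun j : Fin (k + n) => (j : ℕ) < i ∧ w j = false)).card
            ≠ t *
              (Finset.univ.filter (fun j : Fin (k + n) => (j : ℕ) < i ∧ w j = true)).card)))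
      = (Finset.univ.filter (fun w : Fin (k + n) → Bool =>
        (Finset.univ.filter (fun i => w i = true)).card = k ∧ Barbier.good t w)) := by
    apply Finset.filter_congr
    intro w _
    exact Iff.rfl
  rw [hset]
  clear hset
  have hN0 : 0 < k + n := by omega
  have hkn0 : t * k < (k + n) - k := by omega
  have hsub : (k + n) - k - t * k = n - t * k := by omega
  have hchoose : (k + n).choose k = (n + k).choose n := by
    have h1 : (n + k).choose ((n + k) - k) = (n + k).choose k :=
      Nat.choose_symm (by omega)
    have h2 : (n + k) - k = n := by omega
    rw [h2] at h1
    rw [Nat.add_comm k n, h1]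
  have hn' : (0 : ℚ) < (n : ℚ) := by
    have : 0 < n := by omega
    exact_mod_cast this
  have hcount := Barbier.main_count (N := k + n) t k hN0 hkn0
  rw [hsub, hchoose] at hcount
  have hQ : ((k + n : ℕ) : ℚ) *
      ((Finset.univ.filter (fun w : Fin (k + n) → Bool =>
        (Finset.univ.filter (fun i => w i = true)).card = k ∧ Barbier.good t w)).card : ℚ)
      = ((n + k).choose n : ℚ) * ((n : ℚ) - t * k) := by
    have := congrArg (fun x : ℕ => (x : ℚ)) hcount
    push_cast [Nat.cast_sub (le_of_lt hn)] at this
    push_cast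
    linarith [this]
  have hne : ((n : ℚ) + k) ≠ 0 := by
    have : (0 : ℚ) < (n : ℚ) + k := by
      have hk : (0 : ℚ) ≤ (k : ℚ) := Nat.cast_nonneg k
      linarith
    linarith
  rw [eq_div_iff hne]
  push_cast at hQ ⊢
  linarith [hQ]
end

section
/- Let (Y_i) be i.i.d. Bernoulli(p), S_n = Y_1 + ⋯ + Y_n, M(p) = sup_{n≥1} S_n/n, and let t ≥ 2 be an integer with p < 1/t. Then P(M(p) ≤ 1/t) = (1 − tp)/(1 − p) and P(M(p) = 1/t) = (1 − tp)p/(1 − p). -/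
open Finset

namespace BernRM

/-- Partial sums of a step sequence. -/
def Wsum (x : ℕ → ℤ) (n : ℕ) : ℤ := ∑ i ∈ Finset.range n, x i

lemma Wsum_succ (x : ℕ → ℤ) (n : ℕ) : Wsum x (n+1) = Wsum x n + x n := by
  simp [Wsum, Finset.sum_range_succ]

lemma Wsum_shift (x : ℕ → ℤ) (j n : ℕ) :
    Wsum x (j + n) = Wsum x j + ∑ i ∈ Finset.range n, x (j + i) := by
  induction n with
  | zero => simp
  | succ n ih =>
      rw [← Nat.add_assoc, Wsum_succ, ih, Finset.sum_range_succ]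
      ring

section

variable {x : ℕ → ℤ} {N : ℕ}

lemma Wsum_per (hper : ∀ n, x (n + N) = x n) (n : ℕ) :
    Wsum x (n + N) = Wsum x n + Wsum x N := by
  induction n with
  | zero => simp [Wsum]
  | succ n ih =>
      have h1 : n + 1 + N = (n + N) + 1 := by omega
      rw [h1, Wsum_succ, ih, hper, Wsum_succ]
      ring

end


section

variable {x : ℕ → ℤ} {N : ℕ}

/-- lower bound by the min over a period -/
lemma Wsum_lb (hN : 0 < N) (hper : ∀ n, x (n + N) = x n) (hs : 0 ≤ Wsum x N)
    (m : ℤ) (hm : ∀ i < N, m ≤ Wsum x i) : ∀ n, m ≤ Wsum x n := by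
  intro n
  induction n using Nat.strong_induction_on with
  | _ n ih =>
    rcases lt_or_ge n N with h | h
    · exact hm n h
    · have h1 : n = (n - N) + N := by omega
      have := ih (n - N) (by omega)
      rw [h1, Wsum_per hper]
      omega

lemma Wsum_growth (hN : 0 < N) (hper : ∀ n, x (n + N) = x n) (hs : 1 ≤ Wsum x N)
    (m : ℤ) (hm : ∀ i < N, m ≤ Wsum x i) :
    ∀ k n, N * k ≤ n → m + k ≤ Wsum x n := by
  intro k
  induction k with
  | zero =>
      intro n _
      simpa using Wsum_lb hN hper (by omega) m hm n
  | succ k ih =>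
      intro n hn
      have hx : N * (k+1) = N * k + N := by ring
      have h1 : n = (n - N) + N := by omega
      have h2 := ih (n - N) (by omega)
      rw [h1, Wsum_per hper]
      push_cast
      omega

/-- The finitary "good rotation" condition is equivalent to being a strict
running minimum from the right of the bi-infinite path. -/
lemma good_iff (hN : 0 < N) (hper : ∀ n, x (n + N) = x n) (hs : 1 ≤ Wsum x N)
    (j : ℕ) :
    (∀ n < N, 1 ≤ ∑ i ∈ Finset.range (n+1), x (j + i)) ↔
    (∀ n, j < n → Wsum x j < Wsum x n) := by
  constructor
  · intro hgood n
    induction n using Nat.strong_induction_on with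
    | _ n ih =>
      intro hjn
      rcases le_or_gt n (j + N) with h | h
      · have h1 : n = j + (n - j - 1 + 1) := by omega
        have h2 := hgood (n - j - 1) (by omega)
        rw [h1, Wsum_shift]
        omega
      · have h1 : n = (n - N) + N := by omega
        have h2 := ih (n - N) (by omega) (by omega)
        rw [h1, Wsum_per hper]
        omega
  · intro hgood n hn
    have h1 := hgood (j + (n + 1)) (by omega)
    rw [Wsum_shift] at h1
    omega

/-- Dwass' cycle lemma: for an integer step sequence with period `N` and steps
`≤ 1`, the number of rotations all of whose partial sums are positive equals
`max (total sum) 0`. -/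
lemma cycle_count (hN : 0 < N) (hper : ∀ n, x (n + N) = x n)
    (hle : ∀ n, x n ≤ 1) :
    ((Finset.range N).filter (fun j : ℕ => ∀ n < N,
        (1:ℤ) ≤ ∑ i ∈ Finset.range (n+1), x (j + i))).card
      = (Wsum x N).toNat := by
  set s : ℤ := Wsum x N with hsdef
  rcases lt_or_ge s 1 with hs | hs
  · -- no good rotations
    have h0 : ((Finset.range N).filter (fun j : ℕ => ∀ n < N,
        (1:ℤ) ≤ ∑ i ∈ Finset.range (n+1), x (j + i))) = ∅ := by
      rw [Finset.filter_eq_empty_iff]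
      intro j hj hgood
      have h2 := hgood (N - 1) (by omega)
      have hNe : N - 1 + 1 = N := by omega
      rw [hNe] at h2
      have h3 : Wsum x (j + N) = Wsum x j + ∑ i ∈ Finset.range N, x (j + i) :=
        Wsum_shift x j N
      rw [Wsum_per hper] at h3
      omega
    rw [h0]
    simp only [Finset.card_empty]
    omega
  · -- exactly s good rotations
    have hne : ((Finset.range N).image (Wsum x)).Nonempty := by
      rw [Finset.image_nonempty]
      exact Finset.nonempty_range_iff.2 (by omega)
    set m : ℤ := ((Finset.range N).image (Wsum x)).min' hne with hmdef
    have hm_le : ∀ i < N, m ≤ Wsum x i := by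
      intro i hi
      exact Finset.min'_le _ _ (Finset.mem_image_of_mem _ (Finset.mem_range.2 hi))
    obtain ⟨n₀, hn₀N, hn₀⟩ : ∃ n₀, n₀ < N ∧ Wsum x n₀ = m := by
      have := Finset.min'_mem _ hne
      rw [Finset.mem_image] at this
      obtain ⟨a, ha, ha2⟩ := this
      exact ⟨a, Finset.mem_range.1 ha, ha2⟩
    have hlb : ∀ n, m ≤ Wsum x n := Wsum_lb hN hper (by omega) m hm_le
    have hcard : (Finset.Ico m (m + s)).card = s.toNat := by
      rw [Int.card_Ico]; omega
    rw [← hcard]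
    apply Finset.card_bij (fun j _ => Wsum x j)
    · -- maps into Ico m (m+s)
      intro j hj
      rw [Finset.mem_filter, Finset.mem_range] at hj
      obtain ⟨hjN, hgood⟩ := hj
      have hgood' := (good_iff hN hper hs j).1 hgood
      rw [Finset.mem_Ico]
      refine ⟨hm_le j hjN, ?_⟩
      by_contra hcon
      push_neg at hcon
      rcases lt_or_ge j n₀ with h | h
      · have := hgood' n₀ h
        omega
      · have h1 := hgood' (n₀ + N) (by omega)
        rw [Wsum_per hper] at h1
        omega
    · -- injective
      intro j hj j' hj' heq
      rw [Finset.mem_filter] at hj hj'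
      by_contra hne'
      rcases Nat.lt_or_ge j j' with h | h
      · have := (good_iff hN hper hs j).1 hj.2 j' h
        omega
      · have hlt : j' < j := by omega
        have := (good_iff hN hper hs j').1 hj'.2 j hlt
        omega
    · -- surjective
      intro v hv
      rw [Finset.mem_Ico] at hv
      set K : ℕ := (v - m + 1).toNat with hK
      have hKv : (K : ℤ) = v - m + 1 := Int.toNat_of_nonneg (by omega)
      set B : ℕ := N * K with hB
      have hgrow : ∀ n, B ≤ n → v < Wsum x n := by
        intro n hn
        have := Wsum_growth hN hper hs m hm_le K n hn
        omega
      set j : ℕ := Nat.findGreatest (fun n => Wsum x n ≤ v) B with hj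
      have hn₀B : n₀ ≤ B := by
        have : 1 ≤ K := by omega
        calc n₀ ≤ N := by omega
        _ ≤ N * K := by nlinarith
      have hPj : Wsum x j ≤ v := by
        have := Nat.findGreatest_spec (P := fun n => Wsum x n ≤ v) hn₀B (by omega)
        exact this
      have hafter : ∀ n, j < n → v < Wsum x n := by
        intro n hn
        rcases le_or_gt n B with h | h
        · by_contra hcon
          exact Nat.findGreatest_is_greatest hn h (by omega)
        · exact hgrow n (by omega)
      have hWj : Wsum x j = v := by
        have h1 := hafter (j + 1) (by omega)
        have h2 : Wsum x (j+1) = Wsum x j + x j := Wsum_succ x j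
        have h3 := hle j
        omega
      have hjN : j < N := by
        by_contra hcon
        push_neg at hcon
        have h1 : (j - N) + N = j := by omega
        have h2 : Wsum x ((j - N) + N) = Wsum x (j - N) + s := Wsum_per hper _
        rw [h1] at h2
        have := hlb (j - N)
        omega
      refine ⟨j, ?_, hWj⟩
      rw [Finset.mem_filter, Finset.mem_range]
      refine ⟨hjN, (good_iff hN hper hs j).2 ?_⟩
      intro n hn
      rw [hWj]
      exact hafter n hn

end

/-- single letter weight -/
def phi (p : ℝ) (b : Bool) : ℝ := if b then p else 1 - p

/-- weight of a word -/
def wt (p : ℝ) {N : ℕ} (ε : Fin N → Bool) : ℝ := ∏ i, phi p (ε i)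

/-- number of ones -/
def ones {N : ℕ} (ε : Fin N → Bool) : ℕ := (Finset.univ.filter (fun i => ε i = true)).card

lemma wt_nonneg {p : ℝ} (hp0 : 0 ≤ p) (hp1 : p ≤ 1) {N : ℕ} (ε : Fin N → Bool) :
    0 ≤ wt p ε := by
  apply Finset.prod_nonneg
  intro i _
  rcases Bool.dichotomy (ε i) with h | h <;> simp [phi, h] <;> linarith

lemma cube_sum {N : ℕ} (h : Fin N → Bool → ℝ) :
    ∑ ε : Fin N → Bool, ∏ i, h i (ε i) = ∏ i, (h i false + h i true) := by
  have := Finset.prod_univ_sum (κ := fun _ : Fin N => Bool)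
    (t := fun _ => (Finset.univ : Finset Bool)) (f := fun i b => h i b)
  rw [Fintype.piFinset_univ] at this
  rw [← this]
  congr 1
  ext i
  rw [Fintype.sum_bool]
  ring

lemma sum_wt (p : ℝ) (N : ℕ) : ∑ ε : Fin N → Bool, wt p ε = 1 := by
  rw [show (fun ε : Fin N → Bool => wt p ε) = fun ε => ∏ i, phi p (ε i) from rfl]
  rw [cube_sum]
  simp [phi]

lemma pow_ones {N : ℕ} (lam : ℝ) (ε : Fin N → Bool) :
    lam ^ (ones ε) = ∏ i, (if ε i then lam else 1) := by
  rw [Finset.prod_ite, Finset.prod_const, Finset.prod_const, one_pow, mul_one, ones]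

lemma mgf (p lam : ℝ) (N : ℕ) :
    ∑ ε : Fin N → Bool, wt p ε * lam ^ (ones ε) = (1 - p + p * lam) ^ N := by
  have h1 : ∀ ε : Fin N → Bool, wt p ε * lam ^ (ones ε)
      = ∏ i, (phi p (ε i) * (if ε i then lam else 1)) := by
    intro ε
    rw [wt, pow_ones, ← Finset.prod_mul_distrib]
  calc ∑ ε : Fin N → Bool, wt p ε * lam ^ (ones ε)
      = ∑ ε : Fin N → Bool, ∏ i, (phi p (ε i) * (if ε i then lam else 1)) := by
        exact Finset.sum_congr rfl (fun ε _ => h1 ε)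
    _ = ∏ i : Fin N, (phi p false * 1 + phi p true * lam) := by
        rw [cube_sum (fun i b => phi p b * (if b then lam else 1))]
        simp
    _ = (1 - p + p * lam) ^ N := by
        have h3 : phi p false * 1 + phi p true * lam = 1 - p + p * lam := by simp [phi]
        rw [h3, Finset.prod_const, Finset.card_univ, Fintype.card_fin]

lemma ones_mean (p : ℝ) (N : ℕ) :
    ∑ ε : Fin N → Bool, wt p ε * (ones ε : ℝ) = N * p := by
  have h1 : ∀ ε : Fin N → Bool, (ones ε : ℝ) = ∑ i, (if ε i then (1:ℝ) else 0) := by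
    intro ε
    rw [ones]
    rw [Finset.sum_ite, Finset.sum_const, Finset.sum_const]
    simp
  calc ∑ ε : Fin N → Bool, wt p ε * (ones ε : ℝ)
      = ∑ ε : Fin N → Bool, ∑ i : Fin N, wt p ε * (if ε i then (1:ℝ) else 0) := by
        apply Finset.sum_congr rfl
        intro ε _
        rw [h1, Finset.mul_sum]
    _ = ∑ i : Fin N, ∑ ε : Fin N → Bool, wt p ε * (if ε i then (1:ℝ) else 0) :=
        Finset.sum_comm
    _ = ∑ i : Fin N, p := by
        apply Finset.sum_congr rfl
        intro i _
        have h2 : ∀ ε : Fin N → Bool, wt p ε * (if ε i then (1:ℝ) else 0)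
            = ∏ k, (phi p (ε k) * (if k = i then (if ε k then (1:ℝ) else 0) else 1)) := by
          intro ε
          rw [Finset.prod_mul_distrib, ← wt]
          congr 1
          rw [Finset.prod_ite_eq' Finset.univ i (fun k => if ε k then (1:ℝ) else 0)]
          simp
        rw [Finset.sum_congr rfl (fun ε _ => h2 ε),
          cube_sum (fun k b => phi p b * (if k = i then (if b then (1:ℝ) else 0) else 1))]
        rw [Finset.prod_eq_single i]
        · simp [phi]
        · intro k _ hk
          simp [phi, hk]
        · simp
    _ = N * p := by simp [Finset.sum_const, mul_comm]

/-- elementary Bernoulli-type upper bound -/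
lemma pow_one_add_le (δ : ℝ) (hδ : 0 ≤ δ) : ∀ d : ℕ, (d : ℝ) * δ ≤ 1 →
    (1 + δ) ^ d ≤ 1 + d * δ + (d * δ)^2 := by
  intro d
  induction d with
  | zero => norm_num
  | succ d ih =>
      intro hd1
      have hd1' : (d : ℝ) * δ ≤ 1 := by
        have : (d : ℝ) ≤ (d : ℝ) + 1 := by linarith
        push_cast at hd1 ⊢
        nlinarith
      have ih' := ih hd1'
      have h1 : (1 + δ) ^ (d + 1) = (1 + δ) ^ d * (1 + δ) := pow_succ _ _
      rw [h1]
      push_cast at hd1 ⊢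
      have ha : 0 ≤ (d:ℝ) * δ := mul_nonneg (Nat.cast_nonneg d) hδ
      have haa : ((d:ℝ)*δ)^2 ≤ (d:ℝ)*δ := by nlinarith
      have hmul := mul_le_mul_of_nonneg_right ih' (by linarith : (0:ℝ) ≤ 1 + δ)
      nlinarith [mul_nonneg ha hδ, mul_nonneg (mul_nonneg ha ha) hδ]


lemma chernoff (p : ℝ) (hp0 : 0 < p) (hp1 : p < 1) (num den : ℕ) (hden : 0 < den)
    (h : p * den < num) :
    ∃ ρ : ℝ, 0 ≤ ρ ∧ ρ < 1 ∧ ∀ N : ℕ,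
      ∑ ε ∈ Finset.univ.filter (fun ε : Fin N → Bool => num * N ≤ den * ones ε),
        wt p ε ≤ ρ ^ N := by
  have hd0 : (0:ℝ) < den := by positivity
  set δ : ℝ := min (1 / den) ((num - p * den) / (2 * den ^ 2)) with hδdef
  have hδ0 : 0 < δ :=
    lt_min (by positivity) (div_pos (by linarith) (by positivity))
  have hδd : (den:ℝ) * δ ≤ 1 := by
    have h1 : δ ≤ 1 / den := min_le_left _ _
    calc (den:ℝ) * δ ≤ (den:ℝ) * (1 / den) := by
          exact mul_le_mul_of_nonneg_left h1 (le_of_lt hd0)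
      _ = 1 := by field_simp
  have hδ2 : δ ≤ (num - p * den) / (2 * den ^ 2) := min_le_right _ _
  set lam : ℝ := (1 + δ) ^ den with hlamdef
  have hlam1 : 1 ≤ lam := by rw [hlamdef]; exact one_le_pow₀ (by linarith)
  have hkey : 1 - p + p * lam < (1 + δ) ^ num := by
    have hb := pow_one_add_le δ (le_of_lt hδ0) den hδd
    have hBern : 1 + (num:ℝ) * δ ≤ (1 + δ) ^ num :=
      one_add_mul_le_pow (by linarith) num
    have h2 : p * (den:ℝ)^2 * δ ≤ p * ((num:ℝ) - p*den) / 2 := by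
      calc p * (den:ℝ)^2 * δ ≤ p * (den:ℝ)^2 * (((num:ℝ) - p*den)/(2*(den:ℝ)^2)) := by
            exact mul_le_mul_of_nonneg_left hδ2 (by positivity)
        _ = p * ((num:ℝ) - p*den) / 2 := by field_simp
    have hmid : p * ((den:ℝ) * δ + ((den:ℝ)*δ)^2) < (num:ℝ) * δ := by
      nlinarith [mul_le_mul_of_nonneg_right h2 (le_of_lt hδ0),
        mul_lt_mul_of_pos_right h hδ0,
        mul_pos (mul_pos (show (0:ℝ) < (num:ℝ) - p * den by linarith)
          (show (0:ℝ) < 1 - p/2 by linarith)) hδ0]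
    calc 1 - p + p*lam ≤ 1 - p + p*(1 + (den:ℝ)*δ + ((den:ℝ)*δ)^2) := by nlinarith
      _ = 1 + p*((den:ℝ)*δ + ((den:ℝ)*δ)^2) := by ring
      _ < 1 + (num:ℝ)*δ := by linarith
      _ ≤ (1+δ)^num := hBern
  have hpl0 : 0 < 1 - p + p * lam := by nlinarith
  set ρ : ℝ := (1 - p + p * lam) / (1 + δ) ^ num with hρdef
  have hρ0 : 0 ≤ ρ := div_nonneg (le_of_lt hpl0) (by positivity)
  have hρ1 : ρ < 1 := (div_lt_one (by positivity)).2 hkey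
  refine ⟨ρ, hρ0, hρ1, ?_⟩
  intro N
  set C : ℝ := (1 + δ) ^ (num * N) with hC
  have hC0 : 0 < C := by positivity
  have hstep : ∀ ε : Fin N → Bool, num * N ≤ den * ones ε → C ≤ lam ^ ones ε := by
    intro ε hε
    have h5 : lam ^ ones ε = (1 + δ) ^ (den * ones ε) := by rw [hlamdef, ← pow_mul]
    rw [h5, hC]
    exact pow_le_pow_right₀ (by linarith) hε
  have h1 : ∑ ε ∈ Finset.univ.filter
        (fun ε : Fin N → Bool => num * N ≤ den * ones ε), wt p ε
      ≤ (∑ ε ∈ Finset.univ.filter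
        (fun ε : Fin N → Bool => num * N ≤ den * ones ε), wt p ε * lam ^ ones ε) / C := by
    rw [Finset.sum_div]
    apply Finset.sum_le_sum
    intro ε hε
    rw [Finset.mem_filter] at hε
    rw [le_div_iff₀ hC0]
    exact mul_le_mul_of_nonneg_left (hstep ε hε.2)
      (wt_nonneg (le_of_lt hp0) (le_of_lt hp1) ε)
  have h4 : (∑ ε ∈ Finset.univ.filter
        (fun ε : Fin N → Bool => num * N ≤ den * ones ε), wt p ε * lam ^ ones ε)
      ≤ ∑ ε : Fin N → Bool, wt p ε * lam ^ ones ε := by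
    apply Finset.sum_le_sum_of_subset_of_nonneg (Finset.filter_subset _ _)
    intro ε _ _
    exact mul_nonneg (wt_nonneg (le_of_lt hp0) (le_of_lt hp1) ε)
      (pow_nonneg (by linarith) _)
  have h6 : (∑ ε : Fin N → Bool, wt p ε * lam ^ ones ε) / C = ρ ^ N := by
    rw [mgf, hρdef, div_pow, ← pow_mul, hC]
  calc ∑ ε ∈ Finset.univ.filter
        (fun ε : Fin N → Bool => num * N ≤ den * ones ε), wt p ε
      ≤ (∑ ε ∈ Finset.univ.filter
        (fun ε : Fin N → Bool => num * N ≤ den * ones ε), wt p ε * lam ^ ones ε) / C := h1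
    _ ≤ (∑ ε : Fin N → Bool, wt p ε * lam ^ ones ε) / C := by
        gcongr
    _ = ρ ^ N := h6

section Path

/-- integer step of the transformed walk `n - t * S_n` -/
def stepz (t : ℕ) (b : Bool) : ℤ := if b then 1 - (t:ℤ) else 1

/-- periodic extension of a word -/
def exte {N : ℕ} (ε : Fin N → Bool) (n : ℕ) : Bool :=
  if h : 0 < N then ε ⟨n % N, Nat.mod_lt n h⟩ else false

def xstep (t : ℕ) {N : ℕ} (ε : Fin N → Bool) (n : ℕ) : ℤ := stepz t (exte ε n)

/-- the walk stays strictly positive during the word -/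
def strictCond (t : ℕ) {N : ℕ} (ε : Fin N → Bool) : Prop :=
  ∀ n < N, (1:ℤ) ≤ ∑ i ∈ Finset.range (n+1), xstep t ε i

/-- the walk stays nonnegative during the word -/
def laxCond (t : ℕ) {N : ℕ} (ε : Fin N → Bool) : Prop :=
  ∀ n < N, (0:ℤ) ≤ ∑ i ∈ Finset.range (n+1), xstep t ε i

instance (t N : ℕ) : DecidablePred (fun ε : Fin N → Bool => strictCond t ε) := fun ε =>
  decidable_of_iff (∀ n < N, (1:ℤ) ≤ ∑ i ∈ Finset.range (n+1), xstep t ε i) Iff.rfl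

instance (t N : ℕ) : DecidablePred (fun ε : Fin N → Bool => laxCond t ε) := fun ε =>
  decidable_of_iff (∀ n < N, (0:ℤ) ≤ ∑ i ∈ Finset.range (n+1), xstep t ε i) Iff.rfl

lemma exte_lt {N : ℕ} (ε : Fin N → Bool) (i : ℕ) (h : i < N) : exte ε i = ε ⟨i, h⟩ := by
  have hN : 0 < N := by omega
  simp only [exte, dif_pos hN]
  congr 1
  exact Fin.ext (Nat.mod_eq_of_lt h)

lemma exte_congr {N : ℕ} (ε : Fin N → Bool) {a b : ℕ} (h : a % N = b % N) :
    exte ε a = exte ε b := by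
  simp only [exte, h]

lemma exte_per {N : ℕ} (ε : Fin N → Bool) (n : ℕ) : exte ε (n + N) = exte ε n :=
  exte_congr ε (Nat.add_mod_right n N)

lemma stepz_le_one (t : ℕ) (b : Bool) : stepz t b ≤ 1 := by
  rcases b <;> simp [stepz] <;> omega

lemma sum_stepz (t : ℕ) {N : ℕ} (ε : Fin N → Bool) :
    ∑ i ∈ Finset.range N, xstep t ε i = (N : ℤ) - t * ones ε := by
  rw [← Fin.sum_univ_eq_sum_range (fun i => xstep t ε i) N]
  have h1 : ∀ i : Fin N, xstep t ε i.val = stepz t (ε i) := by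
    intro i
    rw [xstep, exte_lt ε i.val i.isLt]
  rw [Finset.sum_congr rfl (fun i _ => h1 i)]
  have h2 : ∀ i : Fin N, stepz t (ε i) = (if ε i = true then (1:ℤ) - t else 1) := by
    intro i; rcases Bool.dichotomy (ε i) with h | h <;> simp [stepz, h]
  rw [Finset.sum_congr rfl (fun i _ => h2 i), Finset.sum_ite, Finset.sum_const,
    Finset.sum_const]
  have h3 := Finset.card_filter_add_card_filter_not
    (s := (Finset.univ : Finset (Fin N))) (p := fun i => ε i = true)
  rw [ones]
  simp only [Finset.card_univ, Fintype.card_fin] at h3 ⊢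
  have h4 : (Finset.filter (fun i => ¬ ε i = true) Finset.univ).card
      = N - (Finset.filter (fun i => ε i = true) Finset.univ).card := by omega
  rw [h4]
  have h5 : (Finset.filter (fun i => ε i = true) Finset.univ).card ≤ N := by omega
  push_cast [h5]
  ring_nf
  omega

/-- total sum of steps -/
lemma Wsum_xstep (t : ℕ) {N : ℕ} (ε : Fin N → Bool) :
    Wsum (xstep t ε) N = (N : ℤ) - t * ones ε := sum_stepz t ε

end Path

section Count

variable {p : ℝ}

/-- rotation of a word -/
def rotw {N : ℕ} (j : ℕ) (ε : Fin N → Bool) : Fin N → Bool := fun i => exte ε (j + i.val)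

lemma rotw_exte {N : ℕ} (hN : 0 < N) (j : ℕ) (ε : Fin N → Bool) (i : ℕ) :
    exte (rotw j ε) i = exte ε (j + i) := by
  have h1 : exte (rotw j ε) i = rotw j ε ⟨i % N, Nat.mod_lt i hN⟩ := by
    simp only [exte, dif_pos hN]
  rw [h1, rotw]
  apply exte_congr
  conv_rhs => rw [Nat.add_mod j i N]
  rw [Nat.add_mod j (i % N) N, Nat.mod_mod_of_dvd]
  exact dvd_refl N

lemma rot_cond_iff (t : ℕ) {N : ℕ} (hN : 0 < N) (j : ℕ) (ε : Fin N → Bool) :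
    (∀ n < N, (1:ℤ) ≤ ∑ i ∈ Finset.range (n+1), xstep t ε (j + i)) ↔
      strictCond t (rotw j ε) := by
  unfold strictCond
  apply forall₂_congr
  intro n _
  have h1 : ∀ i, xstep t (rotw j ε) i = xstep t ε (j + i) := by
    intro i
    rw [xstep, xstep, rotw_exte hN]
  rw [Finset.sum_congr rfl (fun i _ => h1 i)]

lemma sum_rot (t : ℕ) {N : ℕ} (hN : 0 < N) (j : ℕ) :
    ∑ ε : Fin N → Bool, wt p ε * (if strictCond t (rotw j ε) then (1:ℝ) else 0)
      = ∑ ε : Fin N → Bool, wt p ε * (if strictCond t ε then (1:ℝ) else 0) := by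
  classical
  set σ : Fin N → Fin N := fun i => ⟨(j + i.val) % N, Nat.mod_lt _ hN⟩ with hσ
  have hinj : Function.Injective σ := by
    intro i₁ i₂ h
    have h2 : (j + i₁.val) % N = (j + i₂.val) % N := congrArg Fin.val h
    have h3 : i₁.val ≡ i₂.val [MOD N] := Nat.ModEq.add_left_cancel' j h2
    have h4 : i₁.val % N = i₂.val % N := h3
    rw [Nat.mod_eq_of_lt i₁.isLt, Nat.mod_eq_of_lt i₂.isLt] at h4
    exact Fin.ext h4
  set σe : Fin N ≃ Fin N := Equiv.ofBijective σ (Finite.injective_iff_bijective.1 hinj)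
    with hσe
  have hσe_app : ∀ i, σe i = σ i := fun i => rfl
  have hrot : ∀ ε : Fin N → Bool, rotw j ε = fun i => ε (σe i) := by
    intro ε
    funext i
    rw [rotw, hσe_app, hσ]
    simp only [exte, dif_pos hN]
  have hwt : ∀ ε : Fin N → Bool, wt p (fun i => ε (σe i)) = wt p ε := by
    intro ε
    rw [wt, wt]
    exact Equiv.prod_comp σe (fun i => phi p (ε i))
  set E : (Fin N → Bool) ≃ (Fin N → Bool) := Equiv.arrowCongr σe.symm (Equiv.refl Bool)
    with hE
  have hEapp : ∀ ε : Fin N → Bool, E ε = fun i => ε (σe i) := by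
    intro ε
    funext i
    simp [hE, Equiv.arrowCongr]
  calc ∑ ε : Fin N → Bool, wt p ε * (if strictCond t (rotw j ε) then (1:ℝ) else 0)
      = ∑ ε : Fin N → Bool, wt p (E ε) * (if strictCond t (E ε) then (1:ℝ) else 0) := by
        apply Finset.sum_congr rfl
        intro ε _
        rw [hEapp, hwt, ← hrot]
    _ = ∑ ε : Fin N → Bool, wt p ε * (if strictCond t ε then (1:ℝ) else 0) :=
        Equiv.sum_comp E (fun ε => wt p ε * (if strictCond t ε then (1:ℝ) else 0))

lemma strict_count (t : ℕ) {N : ℕ} (hN : 0 < N) :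
    (N : ℝ) * ∑ ε ∈ Finset.univ.filter (fun ε : Fin N → Bool => strictCond t ε), wt p ε
      = ∑ ε : Fin N → Bool, wt p ε * ((((N : ℤ) - t * ones ε).toNat : ℕ) : ℝ) := by
  classical
  have hcyc : ∀ ε : Fin N → Bool,
      ((((N:ℤ) - t * ones ε).toNat : ℕ) : ℝ)
        = ∑ j ∈ Finset.range N, (if strictCond t (rotw j ε) then (1:ℝ) else 0) := by
    intro ε
    have h1 := cycle_count (x := xstep t ε) hN (fun n => by rw [xstep, xstep, exte_per])
      (fun n => stepz_le_one t _)
    rw [Wsum_xstep] at h1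
    rw [← h1, Finset.card_filter]
    push_cast
    apply Finset.sum_congr rfl
    intro j _
    rw [if_congr (rot_cond_iff t hN j ε) rfl rfl]
  calc (N : ℝ) * ∑ ε ∈ Finset.univ.filter (fun ε : Fin N → Bool => strictCond t ε), wt p ε
      = ∑ j ∈ Finset.range N, ∑ ε : Fin N → Bool,
          wt p ε * (if strictCond t ε then (1:ℝ) else 0) := by
        rw [Finset.sum_const, Finset.card_range, nsmul_eq_mul]
        congr 1
        rw [Finset.sum_filter]
        apply Finset.sum_congr rfl
        intro ε _
        rw [mul_ite, mul_one, mul_zero]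
    _ = ∑ j ∈ Finset.range N, ∑ ε : Fin N → Bool,
          wt p ε * (if strictCond t (rotw j ε) then (1:ℝ) else 0) := by
        apply Finset.sum_congr rfl
        intro j _
        exact (sum_rot t hN j).symm
    _ = ∑ ε : Fin N → Bool, ∑ j ∈ Finset.range N,
          wt p ε * (if strictCond t (rotw j ε) then (1:ℝ) else 0) := Finset.sum_comm
    _ = ∑ ε : Fin N → Bool, wt p ε * ((((N : ℤ) - t * ones ε).toNat : ℕ) : ℝ) := by
        apply Finset.sum_congr rfl
        intro ε _
        rw [hcyc, Finset.mul_sum]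

end Count

section Limits

variable {p : ℝ}

/-- first moment identity: `∑ wt * (N - t*ones) = N*(1-t*p)` -/
lemma mean_z (p : ℝ) (t N : ℕ) :
    ∑ ε : Fin N → Bool, wt p ε * ((N : ℝ) - t * ones ε) = N * (1 - t * p) := by
  have h1 : ∀ ε : Fin N → Bool, wt p ε * ((N : ℝ) - t * ones ε)
      = (N:ℝ) * wt p ε - t * (wt p ε * (ones ε : ℝ)) := by intro ε; ring
  rw [Finset.sum_congr rfl (fun ε _ => h1 ε), Finset.sum_sub_distrib,
    ← Finset.mul_sum, ← Finset.mul_sum, sum_wt, ones_mean]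
  ring

/-- quantitative convergence of the strict-event weight sums -/
lemma strict_tendsto (hp0 : 0 < p) (hp1 : p < 1) (t : ℕ) (ht0 : 0 < t) (hpt : p * t < 1) :
    ∃ ρ : ℝ, 0 ≤ ρ ∧ ρ < 1 ∧ ∀ N : ℕ, 0 < N →
      (1 - t*p) ≤ ∑ ε ∈ Finset.univ.filter (fun ε : Fin N → Bool => strictCond t ε), wt p ε ∧
      ∑ ε ∈ Finset.univ.filter (fun ε : Fin N → Bool => strictCond t ε), wt p ε
        ≤ (1 - t*p) + t * ρ ^ N := by
  classical
  obtain ⟨ρ, hρ0, hρ1, hρ⟩ := chernoff p hp0 hp1 1 t ht0 (by push_cast; linarith)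
  refine ⟨ρ, hρ0, hρ1, ?_⟩
  intro N hN
  have hwnn : ∀ ε : Fin N → Bool, 0 ≤ wt p ε := wt_nonneg (le_of_lt hp0) (le_of_lt hp1)
  -- the error term
  set D : ℝ := ∑ ε : Fin N → Bool,
    wt p ε * (((((N : ℤ) - t * ones ε).toNat : ℕ) : ℝ) - ((N : ℝ) - t * ones ε)) with hD
  have hptwise : ∀ ε : Fin N → Bool,
      (0:ℝ) ≤ (((((N : ℤ) - t * ones ε).toNat : ℕ) : ℝ) - ((N : ℝ) - t * ones ε)) ∧
      (((((N : ℤ) - t * ones ε).toNat : ℕ) : ℝ) - ((N : ℝ) - t * ones ε))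
        ≤ (t*N : ℝ) * (if 1 * N ≤ t * ones ε then (1:ℝ) else 0) := by
    intro ε
    have hones : ones ε ≤ N := by
      have := Finset.card_filter_le (Finset.univ : Finset (Fin N)) (fun i => ε i = true)
      simpa [ones] using this
    rcases le_or_gt ((N : ℤ) - t * ones ε) 0 with h | h
    · have h2 : (((N : ℤ) - t * ones ε).toNat : ℕ) = 0 := by omega
      have h3 : (1:ℕ) * N ≤ t * ones ε := by
        have : (N : ℤ) ≤ t * ones ε := by omega
        push_cast at this ⊢
        omega
      rw [h2, if_pos h3]
      constructor
      · push_cast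
        have : (N : ℝ) ≤ t * ones ε := by exact_mod_cast (by omega : (N:ℤ) ≤ t * ones ε)
        linarith
      · push_cast
        have h4 : (t:ℝ) * ones ε ≤ t * N := by
          apply mul_le_mul_of_nonneg_left _ (by positivity)
          exact_mod_cast hones
        linarith
    · have h2 : ((((N : ℤ) - t * ones ε).toNat : ℕ) : ℝ) = ((N : ℝ) - t * ones ε) := by
        have h3 : (((N : ℤ) - t * ones ε).toNat : ℤ) = (N : ℤ) - t * ones ε := by omega
        exact_mod_cast h3
      rw [h2]
      constructor
      · linarith
      · have : (0:ℝ) ≤ (t*N : ℝ) * (if 1 * N ≤ t * ones ε then (1:ℝ) else 0) := by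
          positivity
        linarith
  have hD0 : 0 ≤ D := by
    apply Finset.sum_nonneg
    intro ε _
    exact mul_nonneg (hwnn ε) (hptwise ε).1
  have hDle : D ≤ t * N * ρ ^ N := by
    have h5 : D ≤ ∑ ε : Fin N → Bool,
        wt p ε * ((t*N : ℝ) * (if 1 * N ≤ t * ones ε then (1:ℝ) else 0)) := by
      apply Finset.sum_le_sum
      intro ε _
      exact mul_le_mul_of_nonneg_left (hptwise ε).2 (hwnn ε)
    have h6 : ∑ ε : Fin N → Bool,
        wt p ε * ((t*N : ℝ) * (if 1 * N ≤ t * ones ε then (1:ℝ) else 0))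
        = (t*N:ℝ) * ∑ ε ∈ Finset.univ.filter
            (fun ε : Fin N → Bool => 1 * N ≤ t * ones ε), wt p ε := by
      rw [Finset.sum_filter, Finset.mul_sum]
      apply Finset.sum_congr rfl
      intro ε _
      rcases em ((1:ℕ) * N ≤ t * ones ε) with h | h <;> simp [h] <;> ring
    have h7 := hρ N
    calc D ≤ _ := h5
      _ = _ := h6
      _ ≤ (t*N:ℝ) * ρ ^ N := by
          apply mul_le_mul_of_nonneg_left h7 (by positivity)
      _ = t * N * ρ ^ N := by ring
  -- master identity
  have hmaster := strict_count (p := p) t hN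
  have hsplit : ∑ ε : Fin N → Bool, wt p ε * ((((N : ℤ) - t * ones ε).toNat : ℕ) : ℝ)
      = N * (1 - t*p) + D := by
    rw [hD, ← mean_z p t N]
    rw [← Finset.sum_add_distrib]
    apply Finset.sum_congr rfl
    intro ε _
    ring
  have hNpos : (0:ℝ) < N := by exact_mod_cast hN
  have hS : ∑ ε ∈ Finset.univ.filter (fun ε : Fin N → Bool => strictCond t ε), wt p ε
      = (1 - t*p) + D / N := by
    have := hmaster.trans hsplit
    field_simp at this ⊢
    linarith [this]
  rw [hS]
  constructor
  · have : 0 ≤ D / N := div_nonneg hD0 (le_of_lt hNpos)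
    linarith
  · have : D / N ≤ t * ρ ^ N := by
      rw [div_le_iff₀ hNpos]
      calc D ≤ t * N * ρ ^ N := hDle
        _ = t * ρ ^ N * N := by ring
    linarith

end Limits

section Succ

variable {p : ℝ}

lemma xstep_cons_zero (t : ℕ) {N : ℕ} (b : Bool) (δ : Fin N → Bool) :
    xstep t (Fin.cons b δ : Fin (N+1) → Bool) 0 = stepz t b := by
  rw [xstep, exte_lt _ 0 (Nat.succ_pos N)]
  rfl

lemma xstep_cons_succ (t : ℕ) {N : ℕ} (b : Bool) (δ : Fin N → Bool) (i : ℕ) (hi : i < N) :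
    xstep t (Fin.cons b δ : Fin (N+1) → Bool) (i+1) = xstep t δ i := by
  rw [xstep, xstep, exte_lt _ (i+1) (by omega), exte_lt _ i hi]
  have h1 : (⟨i+1, by omega⟩ : Fin (N+1)) = Fin.succ ⟨i, hi⟩ := rfl
  rw [h1, Fin.cons_succ]

lemma strict_cons_iff (t : ℕ) (ht : 2 ≤ t) {N : ℕ} (b : Bool) (δ : Fin N → Bool) :
    strictCond t (Fin.cons b δ : Fin (N+1) → Bool) ↔ (b = false ∧ laxCond t δ) := by
  have hsum : ∀ n ≤ N, ∑ i ∈ Finset.range (n+1), xstep t (Fin.cons b δ : Fin (N+1) → Bool) i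
      = stepz t b + ∑ i ∈ Finset.range n, xstep t δ i := by
    intro n hn
    rw [Finset.sum_range_succ']
    rw [xstep_cons_zero]
    rw [Finset.sum_congr rfl (fun i hi => xstep_cons_succ t b δ i
      (by rw [Finset.mem_range] at hi; omega))]
    ring
  constructor
  · intro h
    have h0 := h 0 (by omega)
    rw [hsum 0 (by omega)] at h0
    simp only [Finset.range_zero, Finset.sum_empty, add_zero] at h0
    have hb : b = false := by
      rcases Bool.dichotomy b with hb | hb
      · exact hb
      · rw [hb] at h0
        simp only [stepz, if_true] at h0
        exfalso
        have : (2:ℤ) ≤ t := by exact_mod_cast ht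
        omega
    refine ⟨hb, ?_⟩
    intro n hn
    have h1 := h (n+1) (by omega)
    rw [hsum (n+1) (by omega)] at h1
    rw [hb] at h1
    simp only [stepz, if_false, Bool.false_eq_true] at h1
    omega
  · rintro ⟨hb, hlax⟩
    intro n hn
    rw [hsum n (by omega), hb]
    simp only [stepz, if_false, Bool.false_eq_true]
    rcases Nat.eq_zero_or_pos n with h | h
    · simp [h]
    · have := hlax (n-1) (by omega)
      have hn1 : n - 1 + 1 = n := by omega
      rw [hn1] at this
      omega

lemma wt_cons (p : ℝ) {N : ℕ} (b : Bool) (δ : Fin N → Bool) :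
    wt p (Fin.cons b δ : Fin (N+1) → Bool) = phi p b * wt p δ := by
  rw [wt, wt, Fin.prod_univ_succ]
  simp

lemma strict_succ (t : ℕ) (ht : 2 ≤ t) (N : ℕ) :
    ∑ ε ∈ Finset.univ.filter (fun ε : Fin (N+1) → Bool => strictCond t ε), wt p ε
      = (1 - p) * ∑ ε ∈ Finset.univ.filter (fun ε : Fin N → Bool => laxCond t ε), wt p ε := by
  classical
  set e : (Bool × (Fin N → Bool)) ≃ (Fin (N+1) → Bool) :=
    Fin.consEquiv (fun _ => Bool) with he
  have happ : ∀ bd : Bool × (Fin N → Bool), e bd = Fin.cons bd.1 bd.2 := fun _ => rfl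
  rw [Finset.sum_filter]
  rw [← Equiv.sum_comp e (fun ε => if strictCond t ε then wt p ε else 0)]
  rw [Fintype.sum_prod_type]
  rw [Fintype.sum_bool]
  have htrue : ∑ δ : Fin N → Bool,
      (if strictCond t (e (true, δ)) then wt p (e (true, δ)) else 0) = 0 := by
    apply Finset.sum_eq_zero
    intro δ _
    rw [happ]
    rw [if_neg]
    rw [strict_cons_iff t ht]
    simp
  have hfalse : ∑ δ : Fin N → Bool,
      (if strictCond t (e (false, δ)) then wt p (e (false, δ)) else 0)
      = (1 - p) * ∑ δ ∈ Finset.univ.filter (fun δ : Fin N → Bool => laxCond t δ), wt p δ := by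
    rw [Finset.sum_filter, Finset.mul_sum]
    apply Finset.sum_congr rfl
    intro δ _
    rw [happ, wt_cons]
    have h1 : strictCond t (Fin.cons false δ : Fin (N+1) → Bool) ↔ laxCond t δ := by
      rw [strict_cons_iff t ht]
      simp
    rcases em (laxCond t δ) with h | h
    · rw [if_pos (h1.2 h), if_pos h]
      simp [phi]
    · rw [if_neg (fun hc => h (h1.1 hc)), if_neg h]
      ring
  rw [htrue, hfalse]
  ring

end Succ

section Measure
open MeasureTheory ProbabilityTheory

variable {Ω : Type*} [MeasurableSpace Ω] {μ : Measure Ω} [IsProbabilityMeasure μ]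
  {p : ℝ} {Y : ℕ → Ω → ℝ}

open scoped Classical in
/-- the word of outcomes of the first `N` variables -/
noncomputable def wordOf (Y : ℕ → Ω → ℝ) (N : ℕ) (ω : Ω) : Fin N → Bool :=
  fun i => if Y i.val ω = 1 then true else false

lemma wordOf_val (h01 : ∀ i ω, Y i ω = 0 ∨ Y i ω = 1) (N : ℕ) (ω : Ω) (i : Fin N) :
    Y i.val ω = (if wordOf Y N ω i then (1:ℝ) else 0) := by
  classical
  rcases h01 i.val ω with h | h
  · rw [wordOf]
    simp only [h]
    norm_num
  · rw [wordOf]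
    simp only [h]
    norm_num

/-- value pattern of a word -/
def vals {N : ℕ} (ε : Fin N → Bool) (i : ℕ) : ℝ :=
  if h : i < N then (if ε ⟨i, h⟩ then 1 else 0) else 0

lemma atom_eq (h01 : ∀ i ω, Y i ω = 0 ∨ Y i ω = 1) (N : ℕ) (ε : Fin N → Bool) :
    {ω | wordOf Y N ω = ε} = ⋂ i ∈ Finset.range N, Y i ⁻¹' ({vals ε i} : Set ℝ) := by
  classical
  ext ω
  simp only [Set.mem_setOf_eq, Set.mem_iInter, Finset.mem_range, Set.mem_preimage,
    Set.mem_singleton_iff]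
  constructor
  · intro h i hi
    rw [vals, dif_pos hi]
    rw [← h]
    exact wordOf_val h01 N ω ⟨i, hi⟩
  · intro h
    funext i
    have h1 := h i.val i.isLt
    rw [vals, dif_pos i.isLt] at h1
    rw [wordOf]
    rcases Bool.dichotomy (ε ⟨i.val, i.isLt⟩) with hb | hb
    · rw [hb] at h1
      simp only [if_false, Bool.false_eq_true] at h1
      rw [Fin.eta] at hb
      rw [h1]
      norm_num
      exact hb.symm ▸ (by rw [← hb]) 
    · rw [hb] at h1
      simp only [if_true] at h1
      rw [Fin.eta] at hb
      rw [h1]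
      simp [hb]

lemma meas_atom (hmeas : ∀ i, Measurable (Y i))
    (hindep : iIndepFun Y μ)
    (h01 : ∀ i ω, Y i ω = 0 ∨ Y i ω = 1)
    (hbern : ∀ i, μ {ω | Y i ω = 1} = ENNReal.ofReal p)
    (hp0 : 0 ≤ p) (hp1 : p ≤ 1) (N : ℕ) (ε : Fin N → Bool) :
    μ {ω | wordOf Y N ω = ε} = ENNReal.ofReal (wt p ε) := by
  rw [atom_eq h01]
  rw [hindep.measure_inter_preimage_eq_mul (Finset.range N)
      (sets := fun i => ({vals ε i} : Set ℝ)) (fun i _ => measurableSet_singleton _)]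
  have h2 : ∀ i ∈ Finset.range N, μ (Y i ⁻¹' ({vals ε i} : Set ℝ))
      = ENNReal.ofReal (if h : i < N then phi p (ε ⟨i, h⟩) else 1) := by
    intro i hi
    rw [Finset.mem_range] at hi
    rw [dif_pos hi]
    have hv : vals ε i = (if ε ⟨i, hi⟩ then (1:ℝ) else 0) := dif_pos hi
    rcases Bool.dichotomy (ε ⟨i, hi⟩) with hb | hb
    · -- false: value 0
      have hv0 : vals ε i = 0 := by rw [hv, hb]; norm_num
      have hset : Y i ⁻¹' ({vals ε i} : Set ℝ) = {ω | Y i ω = 1}ᶜ := by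
        ext ω
        simp only [Set.mem_preimage, Set.mem_singleton_iff, hv0, Set.mem_compl_iff,
          Set.mem_setOf_eq]
        rcases h01 i ω with h | h <;> simp [h]
      rw [hset]
      have hms : MeasurableSet {ω | Y i ω = 1} := by
        have := (hmeas i) (measurableSet_singleton (1:ℝ))
        simpa [Set.preimage, Set.mem_singleton_iff] using this
      rw [prob_compl_eq_one_sub hms, hbern i, hb]
      simp only [phi, if_false, Bool.false_eq_true]
      rw [← ENNReal.ofReal_one, ← ENNReal.ofReal_sub 1 hp0]
    · -- true: value 1
      have hv1 : vals ε i = 1 := by rw [hv, hb]; norm_num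
      have hset : Y i ⁻¹' ({vals ε i} : Set ℝ) = {ω | Y i ω = 1} := by
        ext ω
        simp [hv1]
      rw [hset, hbern i, hb]
      simp [phi]
  rw [Finset.prod_congr rfl h2]
  rw [← ENNReal.ofReal_prod_of_nonneg]
  · congr 1
    rw [← Fin.prod_univ_eq_prod_range
      (fun i => if h : i < N then phi p (ε ⟨i, h⟩) else 1) N]
    rw [wt]
    apply Finset.prod_congr rfl
    intro i _
    rw [dif_pos i.isLt, Fin.eta]
  · intro i _
    rcases Nat.lt_or_ge i N with h | h
    · rw [dif_pos h]
      rcases Bool.dichotomy (ε ⟨i, h⟩) with hb | hb <;> rw [hb] <;> simp [phi] <;> linarith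
    · rw [dif_neg (by omega)]
      norm_num

lemma meas_word_event (hmeas : ∀ i, Measurable (Y i))
    (hindep : iIndepFun Y μ)
    (h01 : ∀ i ω, Y i ω = 0 ∨ Y i ω = 1)
    (hbern : ∀ i, μ {ω | Y i ω = 1} = ENNReal.ofReal p)
    (hp0 : 0 ≤ p) (hp1 : p ≤ 1) (N : ℕ) (Q : (Fin N → Bool) → Prop) [DecidablePred Q] :
    μ {ω | Q (wordOf Y N ω)} = ENNReal.ofReal (∑ ε ∈ Finset.univ.filter Q, wt p ε) := by
  have hset : {ω | Q (wordOf Y N ω)}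
      = ⋃ ε ∈ Finset.univ.filter Q, {ω | wordOf Y N ω = ε} := by
    ext ω
    simp only [Set.mem_setOf_eq, Set.mem_iUnion, Finset.mem_filter, Finset.mem_univ,
      true_and]
    constructor
    · intro h
      exact ⟨wordOf Y N ω, h, rfl⟩
    · rintro ⟨ε, hQ, hw⟩
      rw [hw]
      exact hQ
  rw [hset]
  rw [measure_biUnion_finset]
  · rw [ENNReal.ofReal_sum_of_nonneg
      (fun ε _ => wt_nonneg hp0 hp1 ε)]
    apply Finset.sum_congr rfl
    intro ε _
    exact meas_atom hmeas hindep h01 hbern hp0 hp1 N ε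
  · intro ε _ ε' _ hne
    simp only [Function.onFun]
    rw [Set.disjoint_left]
    intro ω h1 h2
    rw [Set.mem_setOf_eq] at h1 h2
    exact hne (h1 ▸ h2 ▸ rfl)
  · intro ε _
    rw [atom_eq h01]
    apply Finset.measurableSet_biInter
    intro i _
    exact (hmeas i) (measurableSet_singleton _)

lemma xstep_word (h01 : ∀ i ω, Y i ω = 0 ∨ Y i ω = 1) (t N : ℕ) (ω : Ω)
    (n : ℕ) (hn : n < N) :
    ((xstep t (wordOf Y N ω) n : ℤ) : ℝ) = 1 - t * Y n ω := by
  classical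
  rw [xstep, exte_lt _ n hn]
  rcases h01 n ω with h | h
  · have hw : wordOf Y N ω ⟨n, hn⟩ = false := by
      rw [wordOf]
      simp [h]
    rw [hw, stepz]
    simp [h]
  · have hw : wordOf Y N ω ⟨n, hn⟩ = true := by
      rw [wordOf]
      simp [h]
    rw [hw, stepz]
    simp only [if_true]
    push_cast
    rw [h]
    ring

lemma sum_xstep_word (h01 : ∀ i ω, Y i ω = 0 ∨ Y i ω = 1) (t N : ℕ) (ω : Ω) :
    ∀ n, n ≤ N →
    ((∑ i ∈ Finset.range n, xstep t (wordOf Y N ω) i : ℤ) : ℝ)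
      = n - t * ∑ i ∈ Finset.range n, Y i ω := by
  intro n
  induction n with
  | zero => simp
  | succ n ih =>
      intro hn
      rw [Finset.sum_range_succ, Finset.sum_range_succ, Int.cast_add, ih (by omega),
        xstep_word h01 t N ω n (by omega)]
      push_cast
      ring

lemma laxCond_iff_real (h01 : ∀ i ω, Y i ω = 0 ∨ Y i ω = 1) (t N : ℕ) (ω : Ω) :
    laxCond t (wordOf Y N ω) ↔
      ∀ n < N, t * (∑ i ∈ Finset.range (n+1), Y i ω) ≤ ((n:ℝ) + 1) := by
  unfold laxCond
  apply forall₂_congr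
  intro n hn
  have h1 := sum_xstep_word h01 t N ω (n+1) (by omega)
  constructor
  · intro h
    have h2 : (0:ℝ) ≤ ((∑ i ∈ Finset.range (n+1), xstep t (wordOf Y N ω) i : ℤ) : ℝ) := by
      exact_mod_cast h
    rw [h1] at h2
    push_cast at h2
    linarith
  · intro h
    have h2 : (0:ℝ) ≤ ((∑ i ∈ Finset.range (n+1), xstep t (wordOf Y N ω) i : ℤ) : ℝ) := by
      rw [h1]
      push_cast
      linarith
    exact_mod_cast h2

lemma strictCond_iff_real (h01 : ∀ i ω, Y i ω = 0 ∨ Y i ω = 1) (t N : ℕ) (ω : Ω) :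
    strictCond t (wordOf Y N ω) ↔
      ∀ n < N, t * (∑ i ∈ Finset.range (n+1), Y i ω) < ((n:ℝ) + 1) := by
  unfold strictCond
  apply forall₂_congr
  intro n hn
  have h1 := sum_xstep_word h01 t N ω (n+1) (by omega)
  constructor
  · intro h
    have h2 : (0:ℝ) < ((∑ i ∈ Finset.range (n+1), xstep t (wordOf Y N ω) i : ℤ) : ℝ) := by
      exact_mod_cast h
    rw [h1] at h2
    push_cast at h2
    linarith
  · intro h
    have h2 : (0:ℝ) < ((∑ i ∈ Finset.range (n+1), xstep t (wordOf Y N ω) i : ℤ) : ℝ) := by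
      rw [h1]
      push_cast
      linarith
    have : (0:ℤ) < ∑ i ∈ Finset.range (n+1), xstep t (wordOf Y N ω) i := by
      exact_mod_cast h2
    omega

lemma sum_Y_eq_ones (h01 : ∀ i ω, Y i ω = 0 ∨ Y i ω = 1) (N : ℕ) (ω : Ω) :
    ∑ i ∈ Finset.range N, Y i ω = (ones (wordOf Y N ω) : ℝ) := by
  classical
  rw [← Fin.sum_univ_eq_sum_range (fun i => Y i ω) N]
  rw [Finset.sum_congr rfl (fun i _ => wordOf_val h01 N ω i)]
  rw [Finset.sum_ite, Finset.sum_const, Finset.sum_const]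
  rw [ones]
  simp

end Measure

end BernRM


open MeasureTheory ProbabilityTheory BernRM

set_option maxHeartbeats 1000000 in
/-- For i.i.d. Bernoulli(p) variables `Y_i` and an integer `t ≥ 2` with
`p < 1/t`, letting `M = sup_{n≥1} (Y_1 + ⋯ + Y_n)/n`, we have
`P(M ≤ 1/t) = (1 − tp)/(1 − p)` and `P(M = 1/t) = (1 − tp)p/(1 − p)`. -/
theorem bernoulli_running_max_at_inv_t {Ω : Type*} [MeasurableSpace Ω]
    (μ : Measure Ω) [IsProbabilityMeasure μ] (p : ℝ) (t : ℕ) (ht : 2 ≤ t)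
    (hp0 : 0 < p) (hp : p < 1 / t)
    (Y : ℕ → Ω → ℝ) (hmeas : ∀ i, Measurable (Y i))
    (hindep : iIndepFun Y μ)
    (h01 : ∀ i ω, Y i ω = 0 ∨ Y i ω = 1)
    (hbern : ∀ i, μ {ω | Y i ω = 1} = ENNReal.ofReal p)
    (M : Ω → ℝ)
    (hM : ∀ ω, M ω = ⨆ n : ℕ, (∑ i ∈ Finset.range (n + 1), Y i ω) / (n + 1)) :
    μ {ω | M ω ≤ 1 / t} = ENNReal.ofReal ((1 - t * p) / (1 - p)) ∧
    μ {ω | M ω = 1 / t} = ENNReal.ofReal ((1 - t * p) * p / (1 - p)) := by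
  classical
  have ht2 : (2:ℝ) ≤ (t:ℝ) := by exact_mod_cast ht
  have ht0 : (0:ℝ) < (t:ℝ) := by linarith
  have htn0 : 0 < t := by omega
  have hpt : p * t < 1 := by
    rw [lt_div_iff₀ ht0] at hp
    exact hp
  have hp1 : p < 1 := by nlinarith
  have hp1' : (0:ℝ) < 1 - p := by linarith
  have htp1 : (0:ℝ) ≤ 1 - t * p := by nlinarith
  -- events
  set A : ℕ → Set Ω := fun N => {ω | laxCond t (wordOf Y N ω)} with hA
  set A' : ℕ → Set Ω := fun N => {ω | strictCond t (wordOf Y N ω)} with hA'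
  set F : ℕ → ℝ := fun N =>
    ∑ ε ∈ Finset.univ.filter (fun ε : Fin N → Bool => laxCond t ε), wt p ε with hF
  set G : ℕ → ℝ := fun N =>
    ∑ ε ∈ Finset.univ.filter (fun ε : Fin N → Bool => strictCond t ε), wt p ε with hG
  have hmuA : ∀ N, μ (A N) = ENNReal.ofReal (F N) := fun N =>
    meas_word_event hmeas hindep h01 hbern (le_of_lt hp0) (le_of_lt hp1) N _
  have hmuA' : ∀ N, μ (A' N) = ENNReal.ofReal (G N) := fun N =>
    meas_word_event hmeas hindep h01 hbern (le_of_lt hp0) (le_of_lt hp1) N _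
  -- real characterizations
  have hAchar : ∀ N ω, ω ∈ A N ↔
      ∀ n < N, t * (∑ i ∈ Finset.range (n+1), Y i ω) ≤ ((n:ℝ)+1) := by
    intro N ω
    exact laxCond_iff_real h01 t N ω
  have hA'char : ∀ N ω, ω ∈ A' N ↔
      ∀ n < N, t * (∑ i ∈ Finset.range (n+1), Y i ω) < ((n:ℝ)+1) := by
    intro N ω
    exact strictCond_iff_real h01 t N ω
  -- boundedness of the terms
  have hSle : ∀ (n : ℕ) (ω : Ω), ∑ i ∈ Finset.range n, Y i ω ≤ (n:ℝ) := by
    intro n ω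
    calc ∑ i ∈ Finset.range n, Y i ω ≤ ∑ i ∈ Finset.range n, (1:ℝ) := by
          apply Finset.sum_le_sum
          intro i _
          rcases h01 i ω with h | h <;> rw [h] <;> norm_num
      _ = (n:ℝ) := by simp
  have hS0 : ∀ (n : ℕ) (ω : Ω), 0 ≤ ∑ i ∈ Finset.range n, Y i ω := by
    intro n ω
    apply Finset.sum_nonneg
    intro i _
    rcases h01 i ω with h | h <;> rw [h] <;> norm_num
  have hbdd : ∀ ω : Ω, BddAbove (Set.range fun n : ℕ =>
      (∑ i ∈ Finset.range (n+1), Y i ω) / ((n:ℝ)+1)) := by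
    intro ω
    refine ⟨1, ?_⟩
    rintro z ⟨n, rfl⟩
    rw [div_le_one (by positivity)]
    have := hSle (n+1) ω
    push_cast at this ⊢
    linarith
  have hdivpos : ∀ n : ℕ, (0:ℝ) < (n:ℝ) + 1 := fun n => by positivity
  -- M ≤ 1/t characterization
  have hMle : ∀ ω, (M ω ≤ 1 / t ↔
      ∀ n : ℕ, t * (∑ i ∈ Finset.range (n+1), Y i ω) ≤ ((n:ℝ)+1)) := by
    intro ω
    rw [hM ω]
    constructor
    · intro h n
      have h1 : (∑ i ∈ Finset.range (n+1), Y i ω) / ((n:ℝ)+1) ≤ 1 / t :=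
        le_trans (le_ciSup (hbdd ω) n) h
      rw [div_le_div_iff₀ (hdivpos n) ht0] at h1
      linarith
    · intro h
      apply ciSup_le
      intro n
      rw [div_le_div_iff₀ (hdivpos n) ht0]
      have := h n
      linarith
  have hGset : {ω | M ω ≤ 1 / t} = ⋂ N, A N := by
    ext ω
    rw [Set.mem_setOf_eq, hMle ω, Set.mem_iInter]
    constructor
    · intro h N
      rw [hAchar]
      intro n _
      exact h n
    · intro h n
      have := (hAchar (n+1) ω).1 (h (n+1)) n (by omega)
      exact this
  -- measurability
  have hmeasS : ∀ n : ℕ, Measurable (fun ω => ∑ i ∈ Finset.range n, Y i ω) := by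
    intro n
    exact Finset.measurable_sum _ (fun i _ => hmeas i)
  have hmeasA : ∀ N, MeasurableSet (A N) := by
    intro N
    have h1 : A N = ⋂ n, ⋂ (_ : n < N),
        {ω | t * (∑ i ∈ Finset.range (n+1), Y i ω) ≤ ((n:ℝ)+1)} := by
      ext ω
      rw [hAchar]
      simp only [Set.mem_iInter, Set.mem_setOf_eq]
    rw [h1]
    exact MeasurableSet.iInter fun n => MeasurableSet.iInter fun _ =>
      measurableSet_le ((hmeasS (n+1)).const_mul _) measurable_const
  have hmeasA' : ∀ N, MeasurableSet (A' N) := by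
    intro N
    have h1 : A' N = ⋂ n, ⋂ (_ : n < N),
        {ω | t * (∑ i ∈ Finset.range (n+1), Y i ω) < ((n:ℝ)+1)} := by
      ext ω
      rw [hA'char]
      simp only [Set.mem_iInter, Set.mem_setOf_eq]
    rw [h1]
    exact MeasurableSet.iInter fun n => MeasurableSet.iInter fun _ =>
      measurableSet_lt ((hmeasS (n+1)).const_mul _) measurable_const
  -- limits of the weight sums
  obtain ⟨ρ, hρ0, hρ1, hbounds⟩ := strict_tendsto hp0 hp1 t htn0 (by push_cast; linarith)
  have hGlim : Filter.Tendsto G Filter.atTop (nhds (1 - t*p)) := by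
    have hup : Filter.Tendsto (fun N : ℕ => (1 - (t:ℝ)*p) + t * ρ ^ N)
        Filter.atTop (nhds ((1 - t*p) + t * 0)) := by
      exact Filter.Tendsto.add tendsto_const_nhds
        (Filter.Tendsto.const_mul _ (tendsto_pow_atTop_nhds_zero_of_lt_one hρ0 hρ1))
    rw [show (1 - (t:ℝ)*p) + (t:ℝ) * 0 = 1 - t*p by ring] at hup
    apply tendsto_of_tendsto_of_tendsto_of_le_of_le' tendsto_const_nhds hup
    · filter_upwards [Filter.eventually_ge_atTop 1] with N hN
      exact (hbounds N (by omega)).1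
    · filter_upwards [Filter.eventually_ge_atTop 1] with N hN
      exact (hbounds N (by omega)).2
  have hGF : ∀ N, G (N+1) = (1-p) * F N := fun N => strict_succ (p := p) t ht N
  have hFeq : ∀ N, F N = G (N+1) / (1-p) := by
    intro N
    rw [hGF N]
    field_simp
  have hFlim : Filter.Tendsto F Filter.atTop (nhds ((1 - t*p)/(1-p))) := by
    have h1 : Filter.Tendsto (fun N : ℕ => G (N+1)) Filter.atTop (nhds (1 - t*p)) :=
      hGlim.comp (Filter.tendsto_add_atTop_nat 1)
    have h2 := h1.div_const (1-p)
    apply h2.congr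
    intro N
    exact (hFeq N).symm
  -- measure limits
  have hmono : Antitone A := by
    intro N M' hNM ω hω
    rw [hAchar] at hω ⊢
    intro n hn
    exact hω n (by omega)
  have hmono' : Antitone A' := by
    intro N M' hNM ω hω
    rw [hA'char] at hω ⊢
    intro n hn
    exact hω n (by omega)
  have hcontA : Filter.Tendsto (fun N => μ (A N)) Filter.atTop (nhds (μ (⋂ N, A N))) :=
    tendsto_measure_iInter_atTop (fun N => (hmeasA N).nullMeasurableSet) hmono
      ⟨0, measure_ne_top μ _⟩
  have hcontA' : Filter.Tendsto (fun N => μ (A' N)) Filter.atTop (nhds (μ (⋂ N, A' N))) :=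
    tendsto_measure_iInter_atTop (fun N => (hmeasA' N).nullMeasurableSet) hmono'
      ⟨0, measure_ne_top μ _⟩
  have hlimA : Filter.Tendsto (fun N => μ (A N)) Filter.atTop
      (nhds (ENNReal.ofReal ((1 - t*p)/(1-p)))) := by
    have h1 := (ENNReal.continuous_ofReal.tendsto _).comp hFlim
    apply h1.congr
    intro N
    exact (hmuA N).symm
  have hlimA' : Filter.Tendsto (fun N => μ (A' N)) Filter.atTop
      (nhds (ENNReal.ofReal (1 - t*p))) := by
    have h1 := (ENNReal.continuous_ofReal.tendsto _).comp hGlim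
    apply h1.congr
    intro N
    exact (hmuA' N).symm
  have hmuGs : μ (⋂ N, A N) = ENNReal.ofReal ((1 - t*p)/(1-p)) :=
    tendsto_nhds_unique hcontA hlimA
  have hmuGs' : μ (⋂ N, A' N) = ENNReal.ofReal (1 - t*p) :=
    tendsto_nhds_unique hcontA' hlimA'
  have part1 : μ {ω | M ω ≤ 1 / t} = ENNReal.ofReal ((1 - t * p) / (1 - p)) := by
    rw [hGset, hmuGs]
  refine ⟨part1, ?_⟩
  -- Part 2
  set Gs : Set Ω := ⋂ N, A N with hGsdef
  set Gs' : Set Ω := ⋂ N, A' N with hGs'def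
  have hsub : Gs' ⊆ Gs := by
    intro ω hω
    rw [hGsdef, Set.mem_iInter]
    rw [hGs'def, Set.mem_iInter] at hω
    intro N
    rw [hAchar]
    intro n hn
    exact le_of_lt ((hA'char N ω).1 (hω N) n hn)
  have hdiff : μ (Gs \ Gs') = ENNReal.ofReal ((1 - t*p) * p / (1-p)) := by
    rw [measure_diff hsub
      ((MeasurableSet.iInter (fun N => hmeasA' N)).nullMeasurableSet)
      (measure_ne_top μ _), hmuGs, hmuGs', ← ENNReal.ofReal_sub _ htp1]
    congr 1
    field_simp
    ring
  have hincl1 : Gs \ Gs' ⊆ {ω | M ω = 1 / t} := by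
    rintro ω ⟨hωG, hωG'⟩
    have hle : M ω ≤ 1 / t := by
      rw [hMle ω]
      intro n
      rw [hGsdef, Set.mem_iInter] at hωG
      exact (hAchar (n+1) ω).1 (hωG (n+1)) n (by omega)
    rw [hGs'def, Set.mem_iInter] at hωG'
    push_neg at hωG'
    obtain ⟨N, hN⟩ := hωG'
    have hN' : ¬ (∀ n < N, t * (∑ i ∈ Finset.range (n+1), Y i ω) < ((n:ℝ)+1)) := by
      intro hc
      exact hN ((hA'char N ω).2 hc)
    push_neg at hN'
    obtain ⟨n, hn, hge⟩ := hN'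
    have hub : t * (∑ i ∈ Finset.range (n+1), Y i ω) ≤ ((n:ℝ)+1) :=
      (hMle ω).1 hle n
    have hSn : (t:ℝ) * (∑ i ∈ Finset.range (n+1), Y i ω) = (n:ℝ)+1 :=
      le_antisymm hub hge
    have heq : (∑ i ∈ Finset.range (n+1), Y i ω) / ((n:ℝ)+1) = 1 / t := by
      rw [div_eq_div_iff (hdivpos n).ne' ht0.ne']
      linarith
    have hgeM : 1 / (t:ℝ) ≤ M ω := by
      rw [hM ω, ← heq]
      exact le_ciSup (hbdd ω) n
    exact le_antisymm hle hgeM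
  -- rational threshold
  obtain ⟨q, hq1, hq2⟩ := exists_rat_btwn hp
  have hq0 : (0:ℝ) < (q:ℝ) := lt_trans hp0 hq1
  have hqpos : 0 < q := by exact_mod_cast hq0
  set num : ℕ := q.num.toNat with hnumdef
  set den : ℕ := q.den with hdendef
  have hden0 : 0 < den := q.pos
  have hnumcast : ((num:ℕ):ℝ) = ((q.num : ℤ):ℝ) := by
    rw [hnumdef]
    have : (0:ℤ) ≤ q.num := le_of_lt (Rat.num_pos.2 hqpos)
    exact_mod_cast congrArg (Int.cast : ℤ → ℝ) (Int.toNat_of_nonneg this)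
  have hqval : (q:ℝ) = (num:ℝ) / (den:ℝ) := by
    rw [Rat.cast_def, hnumcast, hdendef]
  have hden0' : (0:ℝ) < (den:ℝ) := by exact_mod_cast hden0
  have hpnum : p * den < num := by
    have h1 : p < (num:ℝ)/(den:ℝ) := by rw [← hqval]; exact hq1
    rw [lt_div_iff₀ hden0'] at h1
    linarith
  obtain ⟨ρ₂, hρ₂0, hρ₂1, hch⟩ := chernoff p hp0 hp1 num den hden0 hpnum
  set B : ℕ → Set Ω := fun m =>
    {ω | (num:ℝ) * ((m:ℝ)+1) < (den:ℝ) * ∑ i ∈ Finset.range (m+1), Y i ω} with hBdef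
  have hμB : ∀ m, μ (B m) ≤ ENNReal.ofReal (ρ₂ ^ (m+1)) := by
    intro m
    have hsub2 : B m ⊆
        {ω | (fun ε : Fin (m+1) → Bool => num * (m+1) ≤ den * ones ε) (wordOf Y (m+1) ω)} := by
      intro ω hω
      rw [hBdef] at hω
      simp only [Set.mem_setOf_eq] at hω ⊢
      rw [sum_Y_eq_ones h01 (m+1) ω] at hω
      have h1 : ((num * (m+1) : ℕ) : ℝ) < ((den * ones (wordOf Y (m+1) ω) : ℕ) : ℝ) := by
        push_cast
        linarith
      have h2 : (num * (m+1) : ℕ) < den * ones (wordOf Y (m+1) ω) := by exact_mod_cast h1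
      omega
    calc μ (B m) ≤ μ {ω | (fun ε : Fin (m+1) → Bool =>
          num * (m+1) ≤ den * ones ε) (wordOf Y (m+1) ω)} := measure_mono hsub2
      _ = ENNReal.ofReal (∑ ε ∈ Finset.univ.filter
          (fun ε : Fin (m+1) → Bool => num * (m+1) ≤ den * ones ε), wt p ε) :=
          meas_word_event (Q := fun ε : Fin (m+1) → Bool => num * (m+1) ≤ den * ones ε)
            hmeas hindep h01 hbern (le_of_lt hp0) (le_of_lt hp1) (m+1)
      _ ≤ ENNReal.ofReal (ρ₂ ^ (m+1)) := ENNReal.ofReal_le_ofReal (hch (m+1))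
  set Λ : Set Ω := ⋂ k, ⋃ n, B (n + k) with hΛdef
  have hΛ0 : μ Λ = 0 := by
    set r : ENNReal := ENNReal.ofReal ρ₂ with hrdef
    have hr1 : r < 1 := by rw [hrdef]; exact ENNReal.ofReal_lt_one.2 hρ₂1
    have hrne : (1 - r)⁻¹ ≠ ⊤ := by
      rw [Ne, ENNReal.inv_eq_top, tsub_eq_zero_iff_le]
      exact fun h => absurd h (not_le.2 hr1)
    have hle2 : ∀ k, μ Λ ≤ r ^ (k+1) * (1 - r)⁻¹ := by
      intro k
      have hgeo : (∑' n : ℕ, r ^ (n + k + 1)) = r ^ (k+1) * (1 - r)⁻¹ := by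
        have h1 : ∀ n : ℕ, r ^ (n + k + 1) = r ^ (k+1) * r ^ n := by
          intro n
          rw [← pow_add]
          congr 1
          omega
        rw [tsum_congr h1, ENNReal.tsum_mul_left, ENNReal.tsum_geometric]
      calc μ Λ ≤ μ (⋃ n, B (n + k)) := measure_mono (Set.iInter_subset _ k)
        _ ≤ ∑' n, μ (B (n + k)) := measure_iUnion_le _
        _ ≤ ∑' n : ℕ, r ^ (n + k + 1) := by
            apply ENNReal.tsum_le_tsum
            intro n
            calc μ (B (n + k)) ≤ ENNReal.ofReal (ρ₂ ^ (n + k + 1)) := hμB (n+k)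
              _ = r ^ (n + k + 1) := by rw [hrdef, ENNReal.ofReal_pow hρ₂0]
        _ = r ^ (k+1) * (1 - r)⁻¹ := hgeo
    have htend : Filter.Tendsto (fun k : ℕ => r ^ (k+1) * (1 - r)⁻¹)
        Filter.atTop (nhds 0) := by
      have h1 : Filter.Tendsto (fun k : ℕ => r ^ k) Filter.atTop (nhds 0) :=
        ENNReal.tendsto_pow_atTop_nhds_zero_of_lt_one hr1
      have h2 : Filter.Tendsto (fun k : ℕ => r ^ (k+1)) Filter.atTop (nhds 0) :=
        h1.comp (Filter.tendsto_add_atTop_nat 1)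
      have h3 := ENNReal.Tendsto.mul_const h2 (Or.inr hrne)
      simpa using h3
    have h4 : μ Λ ≤ 0 := ge_of_tendsto htend (Filter.Eventually.of_forall hle2)
    exact le_antisymm h4 (zero_le')
  have hincl2 : {ω | M ω = 1 / t} ⊆ (Gs \ Gs') ∪ Λ := by
    intro ω hω
    rw [Set.mem_setOf_eq] at hω
    have hωG : ω ∈ Gs := by
      rw [hGsdef, Set.mem_iInter]
      intro N
      rw [hAchar]
      intro n hn
      exact (hMle ω).1 (le_of_eq hω) n
    by_cases hG' : ω ∈ Gs'
    · right
      rw [hΛdef, Set.mem_iInter]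
      intro k
      rw [Set.mem_iUnion]
      have hstrict : ∀ m : ℕ, t * (∑ i ∈ Finset.range (m+1), Y i ω) ≤ (m:ℝ) := by
        intro m
        rw [hGs'def, Set.mem_iInter] at hG'
        have h1 := (hA'char (m+1) ω).1 (hG' (m+1)) m (by omega)
        have h2 : (∑ i ∈ Finset.range (m+1), Y i ω)
            = (ones (wordOf Y (m+1) ω) : ℝ) := sum_Y_eq_ones h01 (m+1) ω
        rw [h2] at h1 ⊢
        have h3 : ((t * ones (wordOf Y (m+1) ω) : ℕ) : ℝ) < (m:ℝ) + 1 := by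
          push_cast
          linarith
        have h4 : (t * ones (wordOf Y (m+1) ω) : ℕ) < m + 1 := by exact_mod_cast h3
        have h5 : (t * ones (wordOf Y (m+1) ω) : ℕ) ≤ m := by omega
        calc (t:ℝ) * (ones (wordOf Y (m+1) ω) : ℝ)
            = ((t * ones (wordOf Y (m+1) ω) : ℕ) : ℝ) := by push_cast; ring
          _ ≤ (m:ℝ) := by exact_mod_cast h5
      set θ : ℝ := max (q:ℝ) ((k:ℝ)/((t:ℝ)*((k:ℝ)+1))) with hθdef
      have hθlt : θ < 1/(t:ℝ) := by
        apply max_lt hq2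
        rw [div_lt_div_iff₀ (by positivity) ht0]
        nlinarith
      have hex : ∃ m : ℕ, θ < (∑ i ∈ Finset.range (m+1), Y i ω) / ((m:ℝ)+1) := by
        by_contra hcon
        push_neg at hcon
        have h6 : M ω ≤ θ := by
          rw [hM ω]
          exact ciSup_le hcon
        rw [hω] at h6
        linarith
      obtain ⟨m, hm⟩ := hex
      have hmk : k < m := by
        by_contra hcon
        push_neg at hcon
        have h1 := hstrict m
        have h2 : (∑ i ∈ Finset.range (m+1), Y i ω) / ((m:ℝ)+1)
            ≤ (m:ℝ)/((t:ℝ)*((m:ℝ)+1)) := by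
          rw [div_le_div_iff₀ (hdivpos m) (by positivity)]
          nlinarith [hdivpos m]
        have hmk' : (m:ℝ) ≤ (k:ℝ) := by exact_mod_cast hcon
        have h3 : (m:ℝ)/((t:ℝ)*((m:ℝ)+1)) ≤ (k:ℝ)/((t:ℝ)*((k:ℝ)+1)) := by
          rw [div_le_div_iff₀ (by positivity) (by positivity)]
          nlinarith
        have h4 : (∑ i ∈ Finset.range (m+1), Y i ω) / ((m:ℝ)+1) ≤ θ :=
          le_trans h2 (le_trans h3 (le_max_right _ _))
        linarith
      refine ⟨m - k, ?_⟩
      have hmk2 : m - k + k = m := by omega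
      rw [hmk2, hBdef]
      simp only [Set.mem_setOf_eq]
      have hq3 : (q:ℝ) ≤ θ := le_max_left _ _
      have h5 : (q:ℝ) < (∑ i ∈ Finset.range (m+1), Y i ω)/((m:ℝ)+1) :=
        lt_of_le_of_lt hq3 hm
      rw [hqval, div_lt_div_iff₀ hden0' (hdivpos m)] at h5
      linarith
    · left
      exact ⟨hωG, hG'⟩
  have hfin : μ {ω | M ω = 1 / t} = μ (Gs \ Gs') := by
    apply le_antisymm
    · calc μ {ω | M ω = 1 / t} ≤ μ ((Gs \ Gs') ∪ Λ) := measure_mono hincl2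
        _ ≤ μ (Gs \ Gs') + μ Λ := measure_union_le _ _
        _ = μ (Gs \ Gs') := by rw [hΛ0, add_zero]
    · exact measure_mono hincl1
  rw [hfin, hdiff]
end

section
/- Let (Y_i) be i.i.d. Bernoulli(p) with 0 < p < (t−1)/t for an integer t ≥ 2, S_n = Y_1+⋯+Y_n, and M(p) = sup_{n≥1} S_n/n. Define R_t(p) = p·T_t(q p^{t−1}) where q = 1−p and T_t is the t-ary tree function. Then P(M(p) ≤ (t−1)/t) = 1 − R_t(p). -/
open MeasureTheory ProbabilityTheory

/-- The `t`-ary tree function `T_t(z) = Σ_{n≥0} C(nt,n) z^n/(n(t−1)+1)`. -/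
noncomputable def treeFun (t : ℕ) (z : ℝ) : ℝ :=
  ∑' n : ℕ, (Nat.choose (n * t) n : ℝ) * z ^ n / ((n : ℝ) * ((t : ℝ) - 1) + 1)

/-- `R_t(p) = p·T_t(q p^{t−1})` with `q = 1 − p`. -/
noncomputable def Rt (t : ℕ) (p : ℝ) : ℝ := p * treeFun t ((1 - p) * p ^ (t - 1))


open Finset

namespace BRM

/-- step of the walk: up-step `+1` for `true`, down-step `1 - t` for `false`. -/
def stp (t : ℕ) (b : Bool) : ℤ := if b then 1 else 1 - (t : ℤ)

/-- prefix sums of the cyclic word. -/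
def wsum (t : ℕ) {n : ℕ} (w : ZMod n → Bool) (j : ℕ) : ℤ :=
  ∑ i ∈ Finset.range j, stp t (w (i : ZMod n))

def downs {n : ℕ} [NeZero n] (w : ZMod n → Bool) : ℕ :=
  (Finset.univ.filter (fun i => w i = false)).card

def rot {n : ℕ} (r : ZMod n) (w : ZMod n → Bool) : ZMod n → Bool :=
  fun i => w (i + r)

def GoodW (t : ℕ) {n : ℕ} (w : ZMod n → Bool) : Prop :=
  ∀ j, 0 < j → j < n → wsum t w j ≤ 0

lemma wsum_add (t : ℕ) {n : ℕ} (w : ZMod n → Bool) (a b : ℕ) :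
    wsum t w (a + b) = wsum t w a + ∑ i ∈ range b, stp t (w ((a + i : ℕ) : ZMod n)) := by
  unfold wsum
  rw [Finset.sum_range_add]

lemma sum_shift_univ {n : ℕ} [NeZero n] (g : ZMod n → ℤ) (a : ℕ) :
    ∑ i ∈ range n, g ((a + i : ℕ) : ZMod n) = ∑ x : ZMod n, g x := by
  apply Finset.sum_nbij' (fun i => ((a + i : ℕ) : ZMod n)) (fun x => (x - (a : ZMod n)).val)
  · intro i _; exact Finset.mem_univ _
  · intro x _; exact Finset.mem_range.2 (ZMod.val_lt _)
  · intro i hi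
    have hi' := Finset.mem_range.1 hi
    push_cast
    rw [add_sub_cancel_left, ZMod.val_natCast_of_lt hi']
  · intro x _
    push_cast
    rw [ZMod.natCast_rightInverse _, add_sub_cancel]
  · intro i _; rfl

lemma wsum_total (t : ℕ) {n : ℕ} [NeZero n] (w : ZMod n → Bool) :
    wsum t w n = (n : ℤ) - t * downs w := by
  have h0 : wsum t w n = ∑ x : ZMod n, stp t (w x) := by
    have := sum_shift_univ (fun x => stp t (w x)) 0
    simpa [wsum] using this
  rw [h0, ← Finset.sum_filter_add_sum_filter_not Finset.univ (fun i => w i = false)]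
  have h1 : ∀ i ∈ Finset.univ.filter (fun i => w i = false), stp t (w i) = 1 - (t:ℤ) := by
    intro i hi; simp only [Finset.mem_filter] at hi; simp [stp, hi.2]
  have h2 : ∀ i ∈ Finset.univ.filter (fun i => ¬ (w i = false)), stp t (w i) = 1 := by
    intro i hi; simp only [Finset.mem_filter] at hi
    have : w i = true := by simpa using hi.2
    simp [stp, this]
  rw [Finset.sum_congr rfl h1, Finset.sum_congr rfl h2, Finset.sum_const, Finset.sum_const]
  have hcard : (Finset.univ.filter (fun i => w i = false)).card
      + (Finset.univ.filter (fun i => ¬ (w i = false))).card = n := by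
    rw [Finset.card_filter_add_card_filter_not]
    simp [ZMod.card]
  rw [downs]
  have : ((Finset.univ.filter (fun i => ¬ (w i = false))).card : ℤ)
      = (n : ℤ) - (Finset.univ.filter (fun i => w i = false)).card := by
    omega
  simp only [smul_eq_mul, nsmul_eq_mul, mul_one]
  rw [this]; ring

lemma wsum_rot (t : ℕ) {n : ℕ} [NeZero n] (r : ZMod n) (w : ZMod n → Bool) (j : ℕ) :
    wsum t (rot r w) j = wsum t w (r.val + j) - wsum t w r.val := by
  rw [wsum_add]
  have : ∀ i ∈ range j, stp t (w ((r.val + i : ℕ) : ZMod n)) = stp t ((rot r w) (i : ZMod n)) := by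
    intro i _
    congr 1
    unfold rot
    congr 1
    push_cast
    rw [ZMod.natCast_rightInverse r]
    ring
  rw [Finset.sum_congr rfl this]
  unfold wsum
  ring

end BRM

namespace BRM

lemma wsum_periodic (t : ℕ) {n : ℕ} [NeZero n] (w : ZMod n → Bool) (a : ℕ) :
    wsum t w (a + n) = wsum t w a + wsum t w n := by
  rw [wsum_add]
  congr 1
  rw [sum_shift_univ (fun x => stp t (w x)) a]
  have := sum_shift_univ (fun x => stp t (w x)) 0
  simp only [Nat.zero_add] at this
  rw [wsum, ← this]

section Psi

variable (t : ℕ) {n : ℕ} [NeZero n] (w : ZMod n → Bool) (hw : wsum t w n = 1)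

/-- `ψ j = n•W_j − j`, periodic when total is 1. -/
noncomputable def psi (j : ℕ) : ℤ := (n : ℤ) * wsum t w j - j

lemma psi_periodic (hw : wsum t w n = 1) (j : ℕ) : psi t w (j + n) = psi t w j := by
  unfold psi
  rw [wsum_periodic, hw]
  push_cast; ring

lemma psi_mod (hw : wsum t w n = 1) (j : ℕ) : psi t w j = psi t w (j % n) := by
  conv_lhs => rw [← Nat.mod_add_div j n]
  induction (j / n) with
  | zero => simp
  | succ m ih =>
    have : j % n + n * (m + 1) = (j % n + n * m) + n := by ring
    rw [this, psi_periodic t w hw, ih]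

lemma psi_inj (hw : wsum t w n = 1) {a b : ℕ} (ha : a < n) (hb : b < n)
    (h : psi t w a = psi t w b) : a = b := by
  unfold psi at h
  have hd : (n : ℤ) ∣ (a : ℤ) - b := ⟨wsum t w a - wsum t w b, by linarith⟩
  have : (a : ℤ) = b := by
    rcases hd with ⟨c, hc⟩
    have hn : (0:ℤ) < n := by exact_mod_cast (Nat.pos_of_ne_zero (NeZero.ne n))
    have h1 : (a:ℤ) - b < n := by
      have : (a:ℤ) < n := by exact_mod_cast ha
      have : (0:ℤ) ≤ b := by positivity
      omega
    have h2 : -(n:ℤ) < (a:ℤ) - b := by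
      have : (b:ℤ) < n := by exact_mod_cast hb
      have : (0:ℤ) ≤ a := by positivity
      omega
    rcases lt_trichotomy c 0 with h|h|h
    · nlinarith
    · simp [h] at hc; omega
    · nlinarith
  exact_mod_cast this

/-- "rotation at r is good" phrased on the base word. -/
def GoodRot (r : ℕ) : Prop := ∀ j, 0 < j → j < n → wsum t w (r + j) ≤ wsum t w r

lemma goodRot_iff_psi (hw : wsum t w n = 1) (r : ℕ) :
    GoodRot t w r ↔ ∀ j, 0 < j → j < n → psi t w (r + j) < psi t w r := by
  have hn : (0:ℤ) < n := by exact_mod_cast (Nat.pos_of_ne_zero (NeZero.ne n))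
  constructor
  · intro hg j hj1 hj2
    have := hg j hj1 hj2
    unfold psi
    have hj2' : (j:ℤ) < n := by exact_mod_cast hj2
    push_cast
    nlinarith
  · intro hψ j hj1 hj2
    have := hψ j hj1 hj2
    unfold psi at this
    push_cast at this
    have hj2' : (j:ℤ) < n := by exact_mod_cast hj2
    nlinarith [this]

lemma psi_lt_of_goodRot (hw : wsum t w n = 1) {r r' : ℕ} (hr : r < n) (hr' : r' < n)
    (hne : r ≠ r') (hg : GoodRot t w r') : psi t w r < psi t w r' := by
  have hn : 0 < n := Nat.pos_of_ne_zero (NeZero.ne n)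
  set j0 : ℕ := if r' < r then r - r' else r + n - r' with hj0
  have hj1 : 0 < j0 := by rw [hj0]; split <;> omega
  have hj2 : j0 < n := by rw [hj0]; split <;> omega
  have hψ := (goodRot_iff_psi t w hw r').1 hg j0 hj1 hj2
  have : psi t w (r' + j0) = psi t w r := by
    rcases lt_or_ge r' r with h|h
    · have : r' + j0 = r := by rw [hj0]; split <;> omega
      rw [this]
    · have : r' + j0 = r + n := by rw [hj0]; split <;> omega
      rw [this, psi_periodic t w hw]
  omega

lemma exists_unique_goodRot (hw : wsum t w n = 1) :
    ∃! r : ℕ, r < n ∧ GoodRot t w r := by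
  have hn : 0 < n := Nat.pos_of_ne_zero (NeZero.ne n)
  obtain ⟨r, hrmem, hrmax⟩ := Finset.exists_max_image (Finset.range n) (psi t w)
    ⟨0, Finset.mem_range.2 hn⟩
  have hr : r < n := Finset.mem_range.1 hrmem
  have hgood : GoodRot t w r := by
    rw [goodRot_iff_psi t w hw]
    intro j hj1 hj2
    have hmod : (r + j) % n < n := Nat.mod_lt _ hn
    have hne : (r + j) % n ≠ r := by
      intro h
      rcases lt_or_ge (r + j) n with hc | hc
      · rw [Nat.mod_eq_of_lt hc] at h; omega
      · have h2 : (r + j) % n = r + j - n := by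
          rw [Nat.mod_eq_sub_mod hc, Nat.mod_eq_of_lt (by omega)]
        omega
    have hle : psi t w ((r + j) % n) ≤ psi t w r :=
      hrmax _ (Finset.mem_range.2 hmod)
    have hneq : psi t w ((r + j) % n) ≠ psi t w r := by
      intro h; exact hne (psi_inj t w hw hmod hr h)
    rw [psi_mod t w hw (r + j)]
    omega
  refine ⟨r, ⟨hr, hgood⟩, ?_⟩
  rintro r' ⟨hr', hgood'⟩
  by_contra hne
  have h1 := psi_lt_of_goodRot t w hw hr' hr hne hgood
  have h2 := psi_lt_of_goodRot t w hw hr hr' (Ne.symm hne) hgood'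
  omega

end Psi

end BRM

namespace BRM

open Classical in
/-- first-passage words of length `n`. -/
noncomputable def FPW (t n : ℕ) [NeZero n] : Finset (ZMod n → Bool) :=
  Finset.univ.filter (fun w => GoodW t w ∧ wsum t w n = 1)

variable {t n : ℕ} [NeZero n]

lemma mem_FPW {w : ZMod n → Bool} : w ∈ FPW t n ↔ GoodW t w ∧ wsum t w n = 1 := by
  classical simp [FPW]

lemma rot_rot (a b : ZMod n) (w : ZMod n → Bool) : rot a (rot b w) = rot (a + b) w := by
  funext i; simp [rot, add_assoc]

lemma rot_zero (w : ZMod n → Bool) : rot 0 w = w := by funext i; simp [rot]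

lemma downs_rot (r : ZMod n) (w : ZMod n → Bool) : downs (rot r w) = downs w := by
  classical
  unfold downs rot
  apply Finset.card_bij (fun i _ => i + r)
  · intro a ha; simp only [Finset.mem_filter, Finset.mem_univ, true_and] at ha ⊢; exact ha
  · intro a _ b _ h; exact add_right_cancel h
  · intro b hb
    refine ⟨b - r, ?_, by ring⟩
    simp only [Finset.mem_filter, Finset.mem_univ, true_and, sub_add_cancel] at hb ⊢
    exact hb

lemma wsum_rot_total (t : ℕ) (r : ZMod n) (w : ZMod n → Bool) :
    wsum t (rot r w) n = wsum t w n := by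
  rw [wsum_rot, wsum_periodic]; ring

lemma goodW_rot_iff (t : ℕ) {r : ℕ} (hr : r < n) (w : ZMod n → Bool) :
    GoodW t (rot ((r : ℕ) : ZMod n) w) ↔ GoodRot t w r := by
  have hval : ((r : ℕ) : ZMod n).val = r := ZMod.val_natCast_of_lt hr
  unfold GoodW GoodRot
  constructor
  · intro h j hj1 hj2
    have := h j hj1 hj2
    rw [wsum_rot, hval] at this
    omega
  · intro h j hj1 hj2
    rw [wsum_rot, hval]
    have := h j hj1 hj2
    omega

lemma card_Sset (k : ℕ) :
    (Finset.univ.filter (fun w : ZMod n → Bool => downs w = k)).card = n.choose k := by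
  classical
  have hcard : (Finset.univ : Finset (ZMod n)).card = n := by
    rw [Finset.card_univ, ZMod.card]
  suffices h : (Finset.univ.filter (fun w : ZMod n → Bool => downs w = k)).card
      = (Finset.powersetCard k (Finset.univ : Finset (ZMod n))).card by
    rw [h, Finset.card_powersetCard, hcard]
  apply Finset.card_bij' (fun w _ => Finset.univ.filter (fun i => w i = false))
      (fun D _ => fun i => ! (decide (i ∈ D)))
  · intro w hw
    funext i
    cases h : w i <;> simp [h]
  · intro D hD
    ext i
    simp
  · intro w hw
    simp only [Finset.mem_filter, Finset.mem_univ, true_and] at hw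
    rw [Finset.mem_powersetCard]
    exact ⟨Finset.subset_univ _, hw⟩
  · intro D hD
    rw [Finset.mem_powersetCard] at hD
    simp only [Finset.mem_filter, Finset.mem_univ, true_and]
    unfold downs
    have hDf : Finset.univ.filter (fun i => (! (decide (i ∈ D))) = false) = D := by
      ext i; simp
    rw [hDf, hD.2]


lemma downs_eq_of_mem_FPW {k : ℕ} (hn : n = k * t + 1) (ht : 1 ≤ t)
    {w : ZMod n → Bool} (hw : w ∈ FPW t n) : downs w = k := by
  have h1 := (mem_FPW.1 hw).2
  rw [wsum_total] at h1
  have : (n : ℤ) = (k : ℤ) * t + 1 := by exact_mod_cast congrArg (Nat.cast : ℕ → ℤ) hn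
  have ht' : (1:ℤ) ≤ t := by exact_mod_cast ht
  have h2 : (t : ℤ) * downs w = (t : ℤ) * k := by
    rw [mul_comm (t:ℤ) (k:ℤ)]; omega
  have := mul_left_cancel₀ (by omega : (t:ℤ) ≠ 0) h2
  exact_mod_cast this

lemma wsum_one_of_downs {k : ℕ} (hn : n = k * t + 1) {w : ZMod n → Bool}
    (hd : downs w = k) : wsum t w n = 1 := by
  rw [wsum_total, hd]
  have : (n : ℤ) = (k : ℤ) * t + 1 := by exact_mod_cast congrArg (Nat.cast : ℕ → ℤ) hn
  rw [this]; ring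

end BRM

namespace BRM

lemma card_FPW_mul (t k : ℕ) (ht : 1 ≤ t) :
    haveI : NeZero (k*t+1) := ⟨Nat.succ_ne_zero _⟩
    (FPW t (k*t+1)).card * (k*t+1) = (k*t+1).choose k := by
  classical
  haveI : NeZero (k*t+1) := ⟨Nat.succ_ne_zero _⟩
  set n := k*t+1 with hn
  have hcs := card_Sset (n := n) k
  have hprod : ((FPW t n) ×ˢ Finset.range n).card = (FPW t n).card * (k*t+1) := by
    rw [Finset.card_product, Finset.card_range]
  rw [← hprod, ← hcs]
  apply Finset.card_bij (fun (x : (ZMod n → Bool) × ℕ) _ => rot (-((x.2 : ℕ) : ZMod n)) x.1)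
  · rintro ⟨v, r⟩ hx
    rw [Finset.mem_product] at hx
    simp only [Finset.mem_filter, Finset.mem_univ, true_and]
    rw [downs_rot]
    exact downs_eq_of_mem_FPW hn ht hx.1
  · rintro ⟨v, r⟩ hx ⟨v', r'⟩ hx' heq
    rw [Finset.mem_product] at hx hx'
    have hr : r < n := Finset.mem_range.1 hx.2
    have hr' : r' < n := Finset.mem_range.1 hx'.2
    set w := rot (-((r : ℕ) : ZMod n)) v with hwdef
    have hvw : rot ((r : ℕ) : ZMod n) w = v := by
      rw [hwdef, rot_rot, add_neg_cancel, rot_zero]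
    have hvw' : rot ((r' : ℕ) : ZMod n) w = v' := by
      rw [heq, rot_rot, add_neg_cancel, rot_zero]
    have hw1 : wsum t w n = 1 := by
      have := (mem_FPW.1 hx.1).2
      rw [← wsum_rot_total t ((r : ℕ) : ZMod n) w, hvw]; exact this
    have hg : GoodRot t w r := (goodW_rot_iff t hr w).1 (by rw [hvw]; exact (mem_FPW.1 hx.1).1)
    have hg' : GoodRot t w r' := (goodW_rot_iff t hr' w).1 (by rw [hvw']; exact (mem_FPW.1 hx'.1).1)
    obtain ⟨r₀, _, huniq⟩ := exists_unique_goodRot t w hw1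
    have e1 : r = r₀ := huniq r ⟨hr, hg⟩
    have e2 : r' = r₀ := huniq r' ⟨hr', hg'⟩
    have err : r = r' := by rw [e1, e2]
    have : v = v' := by rw [← hvw, ← hvw', err]
    exact Prod.ext this err
  · intro w hw
    simp only [Finset.mem_filter, Finset.mem_univ, true_and] at hw
    have hw1 : wsum t w n = 1 := wsum_one_of_downs hn hw
    obtain ⟨r, ⟨hr, hg⟩, _⟩ := exists_unique_goodRot t w hw1
    refine ⟨(rot ((r : ℕ) : ZMod n) w, r), ?_, ?_⟩
    · rw [Finset.mem_product]
      constructor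
      · rw [mem_FPW]
        exact ⟨(goodW_rot_iff t hr w).2 hg, by rw [wsum_rot_total]; exact hw1⟩
      · exact Finset.mem_range.2 hr
    · rw [rot_rot, neg_add_cancel, rot_zero]

lemma card_FPW_mul' (t k : ℕ) (ht : 1 ≤ t) :
    haveI : NeZero (k*t+1) := ⟨Nat.succ_ne_zero _⟩
    (FPW t (k*t+1)).card * (k*t+1-k) = (k*t).choose k := by
  haveI : NeZero (k*t+1) := ⟨Nat.succ_ne_zero _⟩
  have h0 := card_FPW_mul t k ht
  set m := k*t with hm
  have hk : k ≤ m := Nat.le_mul_of_pos_right k (by omega)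
  have h1 := Nat.choose_succ_right_eq (m+1) k
  have h2 := Nat.add_one_mul_choose_eq m k
  -- h0 : card * (m+1) = C(m+1,k)
  -- h1 : C(m+1,k+1)*(k+1) = C(m+1,k)*(m+1-k)
  -- h2 : (m+1)*C(m,k) = C(m+1,k+1)*(k+1)
  have key : (FPW t (m+1)).card * (m+1-k) * (m+1) = (m.choose k) * (m+1) := by
    have : (FPW t (m+1)).card * (m+1-k) * (m+1)
        = ((FPW t (m+1)).card * (m+1)) * (m+1-k) := by ring
    rw [this, h0]
    have h3 : m.choose k * (m+1) = (m+1) * m.choose k := mul_comm _ _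
    omega
  exact Nat.eq_of_mul_eq_mul_right (by omega) key

end BRM

namespace BRM

def bval (b : Bool) : ℝ := if b then 1 else 0

noncomputable def zstep (t : ℕ) (y : ℝ) : ℤ := if y = 1 then 1 else 1 - (t : ℤ)

noncomputable def walk (t : ℕ) {Ω : Type*} (Y : ℕ → Ω → ℝ) (ω : Ω) (j : ℕ) : ℤ :=
  ∑ i ∈ Finset.range j, zstep t (Y i ω)

def Ev {Ω : Type*} (Y : ℕ → Ω → ℝ) (n : ℕ) (v : ZMod n → Bool) : Set Ω :=
  ⋂ i ∈ Finset.range n, Y i ⁻¹' {bval (v (i : ZMod n))}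

def Fset (t : ℕ) {Ω : Type*} (Y : ℕ → Ω → ℝ) (n : ℕ) : Set Ω :=
  {ω | (∀ m < n, walk t Y ω m ≤ 0) ∧ walk t Y ω n = 1}

variable {Ω : Type*} {Y : ℕ → Ω → ℝ} {t : ℕ}

lemma zstep_bval (t : ℕ) (b : Bool) : zstep t (bval b) = stp t b := by
  cases b <;> simp [zstep, bval, stp]

lemma mem_Ev {n : ℕ} {v : ZMod n → Bool} {ω : Ω} :
    ω ∈ Ev Y n v ↔ ∀ i < n, Y i ω = bval (v (i : ZMod n)) := by
  simp [Ev]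

lemma walk_succ (ω : Ω) (m : ℕ) :
    walk t Y ω (m + 1) = walk t Y ω m + zstep t (Y m ω) := by
  simp [walk, Finset.sum_range_succ]

lemma zstep_le_one (t : ℕ) (y : ℝ) : zstep t y ≤ 1 := by
  unfold zstep; split <;> omega

lemma walk_eq_wsum {n : ℕ} {v : ZMod n → Bool} {ω : Ω} (h : ω ∈ Ev Y n v)
    {j : ℕ} (hj : j ≤ n) : walk t Y ω j = wsum t v j := by
  unfold walk wsum
  apply Finset.sum_congr rfl
  intro i hi
  have hi' : i < n := lt_of_lt_of_le (Finset.mem_range.1 hi) hj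
  rw [mem_Ev.1 h i hi', zstep_bval]

lemma Fset_eq (h01 : ∀ i ω, Y i ω = 0 ∨ Y i ω = 1) (m : ℕ) :
    haveI : NeZero (m + 1) := ⟨Nat.succ_ne_zero _⟩
    Fset t Y (m + 1) = ⋃ v ∈ FPW t (m + 1), Ev Y (m + 1) v := by
  haveI : NeZero (m + 1) := ⟨Nat.succ_ne_zero _⟩
  set n := m + 1 with hn
  ext ω
  simp only [Set.mem_iUnion, exists_prop]
  constructor
  · rintro ⟨hpre, hone⟩
    set v : ZMod n → Bool := fun i => decide (Y i.val ω = 1) with hv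
    have hev : ω ∈ Ev Y n v := by
      rw [mem_Ev]
      intro i hi
      have hval : ((i : ℕ) : ZMod n).val = i := ZMod.val_natCast_of_lt hi
      rcases h01 i ω with h | h
      · have : ¬ (Y ((i : ZMod n)).val ω = 1) := by rw [hval, h]; norm_num
        simp [hv, this, bval, hval, h]
      · simp [hv, hval, h, bval]
    refine ⟨v, ?_, hev⟩
    rw [mem_FPW]
    constructor
    · intro j hj1 hj2
      rw [← walk_eq_wsum hev (le_of_lt hj2)]
      exact hpre j hj2
    · rw [← walk_eq_wsum hev (le_refl n)]
      exact hone
  · rintro ⟨v, hv, hev⟩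
    rw [mem_FPW] at hv
    constructor
    · intro j hj
      rw [walk_eq_wsum hev (le_of_lt hj)]
      rcases Nat.eq_zero_or_pos j with h | h
      · simp [h, wsum]
      · exact hv.1 j h hj
    · rw [walk_eq_wsum hev (le_refl n)]
      exact hv.2

lemma Aset_eq (ht : 1 ≤ t) :
    (⋃ m : ℕ, Fset t Y (m + 1)) = {ω | ∃ j, 1 ≤ walk t Y ω j} := by
  ext ω
  simp only [Set.mem_iUnion, Set.mem_setOf_eq]
  constructor
  · rintro ⟨m, _, hone⟩
    exact ⟨m + 1, by omega⟩
  · rintro ⟨j, hj⟩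
    have hex : ∃ j, 1 ≤ walk t Y ω j := ⟨j, hj⟩
    classical
    have hj0 : 1 ≤ walk t Y ω (Nat.find hex) := Nat.find_spec hex
    have hpos : Nat.find hex ≠ 0 := by
      intro h
      rw [h] at hj0
      simp [walk] at hj0
    obtain ⟨m, hm⟩ := Nat.exists_eq_succ_of_ne_zero hpos
    rw [hm] at hj0
    refine ⟨m, ?_, ?_⟩
    · intro m' hm'
      have := Nat.find_min hex (by omega : m' < Nat.find hex)
      omega
    · have h1 : walk t Y ω m ≤ 0 := by
        have := Nat.find_min hex (by omega : m < Nat.find hex)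
        omega
      have h2 := walk_succ (t := t) (Y := Y) ω m
      have h3 := zstep_le_one t (Y m ω)
      simp only [Nat.succ_eq_add_one] at hj0
      omega

end BRM

namespace BRM

open MeasureTheory ProbabilityTheory

section Measure

variable {Ω : Type*} [MeasurableSpace Ω] (μ : Measure Ω) [IsProbabilityMeasure μ]
variable {Y : ℕ → Ω → ℝ} {t : ℕ} {p : ℝ}

lemma measurable_Ev (hmeas : ∀ i, Measurable (Y i)) (n : ℕ) (v : ZMod n → Bool) :
    MeasurableSet (Ev Y n v) := by
  apply MeasurableSet.biInter (Finset.range n).countable_toSet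
  intro i _
  exact hmeas i (measurableSet_singleton _)

lemma meas_pre_one (hbern : ∀ i, μ {ω | Y i ω = 1} = ENNReal.ofReal p) (i : ℕ) :
    μ (Y i ⁻¹' {1}) = ENNReal.ofReal p := by
  have : Y i ⁻¹' {1} = {ω | Y i ω = 1} := by ext ω; simp
  rw [this, hbern i]

lemma meas_pre_zero (hmeas : ∀ i, Measurable (Y i))
    (h01 : ∀ i ω, Y i ω = 0 ∨ Y i ω = 1)
    (hbern : ∀ i, μ {ω | Y i ω = 1} = ENNReal.ofReal p) (hp0 : 0 ≤ p) (i : ℕ) :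
    μ (Y i ⁻¹' {0}) = ENNReal.ofReal (1 - p) := by
  have hset : Y i ⁻¹' {0} = (Y i ⁻¹' {1})ᶜ := by
    ext ω
    simp only [Set.mem_preimage, Set.mem_singleton_iff, Set.mem_compl_iff]
    constructor
    · intro h h1; rw [h1] at h; norm_num at h
    · intro h; rcases h01 i ω with h0 | h1
      · exact h0
      · exact absurd h1 h
  rw [hset, measure_compl (hmeas i (measurableSet_singleton _)) (measure_ne_top μ _),
    meas_pre_one μ hbern i, measure_univ, ← ENNReal.ofReal_one,
    ← ENNReal.ofReal_sub _ hp0]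

lemma card_range_filter {n : ℕ} [NeZero n] (P : ZMod n → Prop) [DecidablePred P] :
    ((Finset.range n).filter (fun i => P ((i : ℕ) : ZMod n))).card
      = (Finset.univ.filter P).card := by
  apply Finset.card_bij (fun i _ => ((i : ℕ) : ZMod n))
  · intro a ha
    simp only [Finset.mem_filter, Finset.mem_univ, true_and] at ha ⊢
    exact ha.2
  · intro a ha b hb h
    have ha' : a < n := Finset.mem_range.1 (Finset.mem_filter.1 ha).1
    have hb' : b < n := Finset.mem_range.1 (Finset.mem_filter.1 hb).1
    have := congrArg ZMod.val h
    rwa [ZMod.val_natCast_of_lt ha', ZMod.val_natCast_of_lt hb'] at this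
  · intro x hx
    refine ⟨x.val, ?_, ZMod.natCast_rightInverse x⟩
    simp only [Finset.mem_filter, Finset.mem_univ, true_and] at hx ⊢
    refine ⟨Finset.mem_range.2 (ZMod.val_lt x), ?_⟩
    rw [ZMod.natCast_rightInverse x]
    exact hx

lemma meas_Ev (hmeas : ∀ i, Measurable (Y i))
    (hindep : iIndepFun Y μ)
    (h01 : ∀ i ω, Y i ω = 0 ∨ Y i ω = 1)
    (hbern : ∀ i, μ {ω | Y i ω = 1} = ENNReal.ofReal p) (hp0 : 0 ≤ p)
    {n : ℕ} [NeZero n] (v : ZMod n → Bool) :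
    μ (Ev Y n v) = ENNReal.ofReal p ^ (n - downs v) * ENNReal.ofReal (1 - p) ^ downs v := by
  classical
  have hprod : μ (Ev Y n v) = ∏ i ∈ Finset.range n, μ (Y i ⁻¹' {bval (v (i : ZMod n))}) := by
    apply ProbabilityTheory.iIndep.meas_biInter hindep
    intro i _
    exact ⟨{bval (v (i : ZMod n))}, measurableSet_singleton _, rfl⟩
  rw [hprod]
  have hterm : ∀ i ∈ Finset.range n, μ (Y i ⁻¹' {bval (v (i : ZMod n))})
      = if v ((i : ℕ) : ZMod n) = false then ENNReal.ofReal (1 - p) else ENNReal.ofReal p := by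
    intro i _
    cases hvi : v ((i : ℕ) : ZMod n)
    · simp only [hvi, if_pos rfl, bval]
      simpa using meas_pre_zero μ hmeas h01 hbern hp0 i
    · rw [if_neg (by simp [hvi])]
      simpa [hvi, bval] using meas_pre_one μ hbern i
  rw [Finset.prod_congr rfl hterm, Finset.prod_ite, Finset.prod_const, Finset.prod_const]
  have hfalse : ((Finset.range n).filter (fun i => v ((i : ℕ) : ZMod n) = false)).card
      = downs v := card_range_filter (fun x => v x = false)
  have htrue : ((Finset.range n).filter (fun i => ¬ (v ((i : ℕ) : ZMod n) = false))).card
      = n - downs v := by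
    rw [card_range_filter (fun x => ¬ (v x = false))]
    have h2 := Finset.card_filter_add_card_filter_not
      (s := (Finset.univ : Finset (ZMod n))) (p := fun x => v x = false)
    rw [Finset.card_univ, ZMod.card] at h2
    unfold downs
    omega
  rw [hfalse, htrue, mul_comm]

end Measure

end BRM

namespace BRM

open MeasureTheory ProbabilityTheory

section Measure2

variable {Ω : Type*} [MeasurableSpace Ω] (μ : Measure Ω) [IsProbabilityMeasure μ]
variable {Y : ℕ → Ω → ℝ} {t : ℕ} {p : ℝ}

lemma Ev_disjoint {n : ℕ} [NeZero n] {v v' : ZMod n → Bool} (h : v ≠ v') :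
    Disjoint (Ev Y n v) (Ev Y n v') := by
  rw [Set.disjoint_left]
  intro ω hv hv'
  obtain ⟨i, hi⟩ := Function.ne_iff.1 h
  have h1 := mem_Ev.1 hv i.val (ZMod.val_lt i)
  have h2 := mem_Ev.1 hv' i.val (ZMod.val_lt i)
  rw [ZMod.natCast_rightInverse i] at h1 h2
  apply hi
  have : bval (v i) = bval (v' i) := by rw [← h1, ← h2]
  cases hx : v i <;> cases hy : v' i <;> simp_all [bval]

lemma FPW_empty {m : ℕ} (ht : 1 ≤ t) (hmt : ¬ t ∣ m) :
    haveI : NeZero (m + 1) := ⟨Nat.succ_ne_zero _⟩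
    FPW t (m + 1) = ∅ := by
  haveI : NeZero (m + 1) := ⟨Nat.succ_ne_zero _⟩
  apply Finset.eq_empty_of_forall_notMem
  intro v hv
  have h1 := (mem_FPW.1 hv).2
  rw [wsum_total] at h1
  apply hmt
  refine ⟨downs v, ?_⟩
  have : ((m : ℤ) + 1) - t * downs v = 1 := by push_cast at h1 ⊢; linarith
  have h2 : (m : ℤ) = t * downs v := by linarith
  exact_mod_cast h2

lemma meas_Fset (hmeas : ∀ i, Measurable (Y i))
    (h01 : ∀ i ω, Y i ω = 0 ∨ Y i ω = 1) (m : ℕ) :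
    haveI : NeZero (m + 1) := ⟨Nat.succ_ne_zero _⟩
    μ (Fset t Y (m + 1)) = ∑ v ∈ FPW t (m + 1), μ (Ev Y (m + 1) v) := by
  haveI : NeZero (m + 1) := ⟨Nat.succ_ne_zero _⟩
  rw [Fset_eq h01 m]
  apply measure_biUnion_finset
  · intro v _ v' _ hne
    exact Ev_disjoint hne
  · intro v _
    exact measurable_Ev hmeas _ v

lemma measurable_Fset (hmeas : ∀ i, Measurable (Y i))
    (h01 : ∀ i ω, Y i ω = 0 ∨ Y i ω = 1) (m : ℕ) :
    MeasurableSet (Fset t Y (m + 1)) := by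
  haveI : NeZero (m + 1) := ⟨Nat.succ_ne_zero _⟩
  rw [Fset_eq h01 m]
  exact (FPW t (m+1)).measurableSet_biUnion (fun v _ => measurable_Ev hmeas _ v)

lemma Fset_pairwise_disjoint :
    Pairwise (Function.onFun Disjoint (fun m => Fset t Y (m + 1))) := by
  intro a b hab
  wlog h : a < b generalizing a b
  · exact (this hab.symm (by omega)).symm
  rw [Function.onFun, Set.disjoint_left]
  rintro ω ⟨_, hone⟩ ⟨hpre', _⟩
  have := hpre' (a + 1) (by omega)
  omega

lemma meas_Aset (hmeas : ∀ i, Measurable (Y i))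
    (h01 : ∀ i ω, Y i ω = 0 ∨ Y i ω = 1) :
    μ (⋃ m : ℕ, Fset t Y (m + 1)) = ∑' m : ℕ, μ (Fset t Y (m + 1)) :=
  measure_iUnion Fset_pairwise_disjoint (fun m => measurable_Fset hmeas h01 m)

end Measure2

end BRM

namespace BRM

lemma card_FPW_real (t k : ℕ) (ht : 2 ≤ t) :
    haveI : NeZero (k*t+1) := ⟨Nat.succ_ne_zero _⟩
    ((FPW t (k*t+1)).card : ℝ)
      = ((k*t).choose k : ℝ) / ((k : ℝ) * ((t : ℝ) - 1) + 1) := by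
  haveI : NeZero (k*t+1) := ⟨Nat.succ_ne_zero _⟩
  have h0 := card_FPW_mul' t k (by omega)
  have hk : k ≤ k * t := Nat.le_mul_of_pos_right k (by omega)
  have hcast : ((k*t+1-k : ℕ) : ℝ) = (k : ℝ) * ((t : ℝ) - 1) + 1 := by
    have : (k*t+1-k : ℕ) = k*(t-1)+1 := by
      have h1 : k * (t-1) + k = k * t := by
        have h2 : t - 1 + 1 = t := by omega
        calc k * (t-1) + k = k * ((t-1)+1) := by ring
        _ = k * t := by rw [h2]
      omega
    rw [this]
    push_cast [Nat.cast_sub (by omega : 1 ≤ t)]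
    ring
  have hpos : (0 : ℝ) < (k : ℝ) * ((t : ℝ) - 1) + 1 := by
    have h1t : (1:ℝ) ≤ t := by exact_mod_cast (by omega : 1 ≤ t)
    have h2 : (0:ℝ) ≤ (k : ℝ) * ((t : ℝ) - 1) :=
      mul_nonneg (by positivity) (by linarith)
    linarith
  rw [eq_div_iff (ne_of_gt hpos), ← hcast]
  exact_mod_cast h0

lemma walk_cast {Ω : Type*} {Y : ℕ → Ω → ℝ} {t : ℕ}
    (h01 : ∀ i ω, Y i ω = 0 ∨ Y i ω = 1) (ω : Ω) (j : ℕ) :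
    ((walk t Y ω j : ℤ) : ℝ)
      = (t : ℝ) * (∑ i ∈ Finset.range j, Y i ω) - ((t : ℝ) - 1) * j := by
  unfold walk
  push_cast
  have hterm : ∀ i ∈ Finset.range j,
      ((zstep t (Y i ω) : ℤ) : ℝ) = (t : ℝ) * Y i ω - ((t : ℝ) - 1) := by
    intro i _
    rcases h01 i ω with h | h
    · rw [h]
      have : zstep t (0 : ℝ) = 1 - (t : ℤ) := by simp [zstep]
      rw [this]
      push_cast
      ring
    · rw [h]
      have : zstep t (1 : ℝ) = 1 := by simp [zstep]
      rw [this]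
      push_cast
      ring
  rw [Finset.sum_congr rfl hterm, Finset.sum_sub_distrib, Finset.sum_const,
    Finset.card_range, Finset.mul_sum]
  simp [nsmul_eq_mul]
  ring

end BRM

namespace BRM

lemma Mle_iff {Ω : Type*} {Y : ℕ → Ω → ℝ} {t : ℕ} (ht : 2 ≤ t)
    (h01 : ∀ i ω, Y i ω = 0 ∨ Y i ω = 1) (ω : Ω) :
    (⨆ n : ℕ, (∑ i ∈ Finset.range (n+1), Y i ω) / (n+1)) ≤ ((t:ℝ)-1)/t
      ↔ ∀ j, walk t Y ω j ≤ 0 := by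
  have ht0 : (0:ℝ) < t := by
    have : (2:ℝ) ≤ t := by exact_mod_cast ht
    linarith
  have hYle : ∀ i, Y i ω ≤ 1 := by
    intro i; rcases h01 i ω with h | h <;> rw [h] <;> norm_num
  have hbdd : BddAbove (Set.range fun n : ℕ => (∑ i ∈ Finset.range (n+1), Y i ω)/(n+1)) := by
    refine ⟨1, ?_⟩
    rintro x ⟨n, rfl⟩
    have hsum : (∑ i ∈ Finset.range (n+1), Y i ω) ≤ ((n:ℝ)+1) := by
      have h2 := Finset.sum_le_card_nsmul (Finset.range (n+1)) (fun i => Y i ω) 1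
        (fun i _ => hYle i)
      simp only [Finset.card_range, nsmul_eq_mul, mul_one] at h2
      push_cast at h2
      linarith
    have hpos : (0:ℝ) < (n:ℝ)+1 := by positivity
    simp only []
    rw [div_le_one hpos]
    exact hsum
  rw [ciSup_le_iff hbdd]
  constructor
  · intro h j
    cases j with
    | zero => simp [walk]
    | succ n =>
      have h2 := h n
      have hw := walk_cast (t := t) h01 ω (n+1)
      rw [div_le_div_iff₀ (by positivity) ht0] at h2
      have hcomm : (t:ℝ) * (∑ i ∈ Finset.range (n+1), Y i ω)
          = (∑ i ∈ Finset.range (n+1), Y i ω) * t := mul_comm _ _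
      have h3 : ((walk t Y ω (n+1) : ℤ) : ℝ) ≤ 0 := by
        rw [hw]
        push_cast
        linarith
      exact_mod_cast h3
  · intro h n
    have h2 := h (n+1)
    have hw := walk_cast (t := t) h01 ω (n+1)
    have h3 : ((walk t Y ω (n+1) : ℤ) : ℝ) ≤ 0 := by exact_mod_cast h2
    rw [hw] at h3
    rw [div_le_div_iff₀ (by positivity) ht0]
    have hcomm : (t:ℝ) * (∑ i ∈ Finset.range (n+1), Y i ω)
        = (∑ i ∈ Finset.range (n+1), Y i ω) * t := mul_comm _ _
    push_cast at h3
    linarith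

end BRM

open MeasureTheory ProbabilityTheory BRM

/-- For i.i.d. Bernoulli(p) variables `Y_i` with `0 < p < (t−1)/t` for an
integer `t ≥ 2`, and `M = sup_{n≥1} (Y_1 + ⋯ + Y_n)/n`, we have
`P(M ≤ (t−1)/t) = 1 − R_t(p)`. -/
theorem bernoulli_running_max_le_t_ratio {Ω : Type*} [MeasurableSpace Ω]
    (μ : Measure Ω) [IsProbabilityMeasure μ] (p : ℝ) (t : ℕ) (ht : 2 ≤ t)
    (hp0 : 0 < p) (hp : p < ((t : ℝ) - 1) / t)
    (Y : ℕ → Ω → ℝ) (hmeas : ∀ i, Measurable (Y i))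
    (hindep : iIndepFun Y μ)
    (h01 : ∀ i ω, Y i ω = 0 ∨ Y i ω = 1)
    (hbern : ∀ i, μ {ω | Y i ω = 1} = ENNReal.ofReal p)
    (M : Ω → ℝ)
    (hM : ∀ ω, M ω = ⨆ n : ℕ, (∑ i ∈ Finset.range (n + 1), Y i ω) / (n + 1)) :
    μ {ω | M ω ≤ ((t : ℝ) - 1) / t} = ENNReal.ofReal (1 - Rt t p) := by
  classical
  have ht0 : (0:ℝ) < t := by
    have : (2:ℝ) ≤ t := by exact_mod_cast ht
    linarith
  have h1t : (1:ℝ) ≤ t := by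
    have : (2:ℝ) ≤ t := by exact_mod_cast ht
    linarith
  have hp1 : p < 1 := by
    have h1 : ((t:ℝ)-1)/t < 1 := by
      rw [div_lt_one ht0]; linarith
    linarith
  have hq0 : (0:ℝ) ≤ 1 - p := by linarith
  -- identify the event
  have hset : {ω | M ω ≤ ((t : ℝ) - 1) / t} = (⋃ m : ℕ, Fset t Y (m+1))ᶜ := by
    ext ω
    rw [Set.mem_compl_iff, Aset_eq (t := t) (Y := Y) (by omega : 1 ≤ t)]
    simp only [Set.mem_setOf_eq, not_exists]
    rw [hM ω, Mle_iff ht h01 ω]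
    constructor <;> intro h j <;> (have := h j; omega)
  have hmeasA : MeasurableSet (⋃ m : ℕ, Fset t Y (m+1)) :=
    MeasurableSet.iUnion (fun m => measurable_Fset hmeas h01 m)
  rw [hset, measure_compl hmeasA (measure_ne_top μ _), measure_univ]
  have hA1 : μ (⋃ m : ℕ, Fset t Y (m+1)) = ∑' m : ℕ, μ (Fset t Y (m+1)) :=
    meas_Aset μ hmeas h01
  set f : ℕ → ℝ := fun k =>
    ((k*t).choose k : ℝ) / ((k:ℝ)*((t:ℝ)-1)+1) * (p ^ (k*t+1-k) * (1-p)^k) with hf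
  have hdenpos : ∀ k : ℕ, (0:ℝ) < (k:ℝ)*((t:ℝ)-1)+1 := by
    intro k
    have h2 : (0:ℝ) ≤ (k : ℝ) * ((t : ℝ) - 1) := mul_nonneg (by positivity) (by linarith)
    linarith
  have hknn : ∀ k, 0 ≤ f k := by
    intro k
    apply mul_nonneg
    · exact div_nonneg (by positivity) (le_of_lt (hdenpos k))
    · exact mul_nonneg (by positivity) (by positivity)
  have hFk : ∀ k : ℕ, μ (Fset t Y (k*t+1)) = ENNReal.ofReal (f k) := by
    intro k
    haveI : NeZero (k*t+1) := ⟨Nat.succ_ne_zero _⟩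
    rw [show (k*t+1) = (k*t)+1 from rfl, meas_Fset μ hmeas h01 (k*t)]
    have hterm : ∀ v ∈ FPW t (k*t+1), μ (Ev Y (k*t+1) v)
        = ENNReal.ofReal p ^ (k*t+1-k) * ENNReal.ofReal (1-p) ^ k := by
      intro v hv
      rw [meas_Ev μ hmeas hindep h01 hbern hp0.le v,
        downs_eq_of_mem_FPW rfl (by omega : 1 ≤ t) hv]
    rw [Finset.sum_congr rfl hterm, Finset.sum_const, nsmul_eq_mul]
    have hcardR : ((FPW t (k*t+1)).card : ℝ)
        = ((k*t).choose k : ℝ) / ((k : ℝ) * ((t : ℝ) - 1) + 1) := card_FPW_real t k ht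
    have hfk : f k = (((FPW t (k*t+1)).card : ℝ)) * (p ^ (k*t+1-k) * (1-p)^k) := by
      simp only [hf]
      rw [hcardR]
    rw [hfk, ENNReal.ofReal_mul (by positivity), ENNReal.ofReal_natCast,
      ENNReal.ofReal_mul (by positivity), ENNReal.ofReal_pow hp0.le, ENNReal.ofReal_pow hq0]
  have hginj : Function.Injective (fun k : ℕ => k * t) := by
    intro a b h
    simp only [] at h
    exact Nat.eq_of_mul_eq_mul_right (by omega) h
  have hsupp : Function.support (fun m => μ (Fset t Y (m+1)))
      ⊆ Set.range (fun k : ℕ => k * t) := by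
    intro m hm
    by_cases h : t ∣ m
    · exact ⟨m / t, by simpa using Nat.div_mul_cancel h⟩
    · exfalso
      apply hm
      show μ (Fset t Y (m+1)) = 0
      haveI : NeZero (m+1) := ⟨Nat.succ_ne_zero _⟩
      rw [meas_Fset μ hmeas h01 m, FPW_empty (by omega : 1 ≤ t) h, Finset.sum_empty]
  have hre : (∑' m : ℕ, μ (Fset t Y (m+1))) = ∑' k : ℕ, ENNReal.ofReal (f k) := by
    have h2 := Function.Injective.tsum_eq hginj (f := fun m => μ (Fset t Y (m+1))) hsupp
    calc (∑' m : ℕ, μ (Fset t Y (m+1))) = ∑' k : ℕ, μ (Fset t Y (k*t+1)) := h2.symm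
      _ = ∑' k : ℕ, ENNReal.ofReal (f k) := tsum_congr hFk
  have hAof0 : μ (⋃ m : ℕ, Fset t Y (m+1)) = ∑' k : ℕ, ENNReal.ofReal (f k) := hA1.trans hre
  have hne : (∑' k : ℕ, ENNReal.ofReal (f k)) ≠ ⊤ := by
    rw [← hAof0]; exact measure_ne_top μ _
  have hsum : Summable f := by
    have h3 : (∑' k : ℕ, ((Real.toNNReal (f k) : NNReal) : ENNReal)) ≠ ⊤ := hne
    have hsg := ENNReal.tsum_coe_ne_top_iff_summable.1 h3
    have h4 := NNReal.summable_coe.2 hsg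
    apply h4.congr
    intro k
    exact Real.coe_toNNReal (f k) (hknn k)
  have hAof : μ (⋃ m : ℕ, Fset t Y (m+1)) = ENNReal.ofReal (∑' k, f k) := by
    rw [hAof0, ← ENNReal.ofReal_tsum_of_nonneg hknn hsum]
  have hRt : (∑' k, f k) = Rt t p := by
    unfold Rt treeFun
    rw [← tsum_mul_left]
    apply tsum_congr
    intro k
    have he : k*t+1-k = k*(t-1)+1 := by
      have h1 : k * (t-1) + k = k * t := by
        have h2 : t - 1 + 1 = t := by omega
        calc k * (t-1) + k = k * ((t-1)+1) := by ring
        _ = k * t := by rw [h2]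
      omega
    simp only [hf]
    rw [he, mul_pow, ← pow_mul]
    ring
  have hR0 : 0 ≤ Rt t p := hRt ▸ tsum_nonneg hknn
  have hR1 : Rt t p ≤ 1 := by
    have h4 : μ (⋃ m : ℕ, Fset t Y (m+1)) ≤ 1 := prob_le_one
    rw [hAof, hRt] at h4
    exact ENNReal.ofReal_le_one.1 h4
  rw [hAof, hRt, ENNReal.ofReal_sub 1 hR0, ENNReal.ofReal_one]
end
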